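/- arXiv:2602.13177 — 6 statements merged into one kernel-verified Lean document; each statement's English description precedes it below -/
import Mathlib

section
/- Let c ∈ {0,1}^d with at most S nonzero coordinates, and let a partition of [d] into n equal-size blocks be chosen uniformly at random. Then E[(max_j ‖c_{B_j}‖_2)^2] ≤ 6 max{S/n, ln n}. -/
open Finset Real

private lemma card_filter_comp_perm {d : ℕ} (σ : Equiv.Perm (Fin d)) (p : Fin d → Prop)
    [DecidablePred p] :
    (univ.filter (fun i => p (σ i))).card = (univ.filter p).card :=
  Finset.card_equiv σ (by simp)

private lemma partition_count {d n : ℕ} (j : Fin n) (A : Finset (Fin d)) :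
    ((univ.filter (fun B : Fin d → Fin n =>
        ∀ j' : Fin n, (univ.filter (fun i => B i = j')).card = d / n)).filter
          (fun B => ∀ i ∈ A, B i = j)).card * d.choose A.card
      = (univ.filter (fun B : Fin d → Fin n =>
          ∀ j' : Fin n, (univ.filter (fun i => B i = j')).card = d / n)).card
          * (d / n).choose A.card := by
  classical
  set P := univ.filter (fun B : Fin d → Fin n =>
      ∀ j' : Fin n, (univ.filter (fun i => B i = j')).card = d / n) with hP
  set r := A.card with hr
  have inv : ∀ A' : Finset (Fin d), A'.card = r →
      (P.filter (fun B => ∀ i ∈ A', B i = j)).card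
        = (P.filter (fun B => ∀ i ∈ A, B i = j)).card := by
    intro A' hA'
    have hcard : A.card = A'.card := hA'.symm
    let e := Finset.equivOfCardEq hcard
    let σ : Equiv.Perm (Fin d) := e.extendSubtype
    have hmem : ∀ i, i ∈ A → σ i ∈ A' := fun i hi => e.extendSubtype_mem i hi
    have hnmem : ∀ i, i ∉ A → σ i ∉ A' := fun i hi => e.extendSubtype_not_mem i hi
    have hmem' : ∀ i, i ∈ A' → σ.symm i ∈ A := by
      intro i hi
      by_contra h
      exact hnmem _ h (by simpa using hi)
    refine Finset.card_equiv (Equiv.arrowCongr σ.symm (Equiv.refl (Fin n))) ?_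
    intro B
    have happ : ∀ i, (Equiv.arrowCongr σ.symm (Equiv.refl (Fin n)) B) i = B (σ i) := by
      intro i; simp [Equiv.arrowCongr_apply]
    simp only [mem_filter, hP, mem_univ, true_and]
    constructor
    · rintro ⟨h1, h2⟩
      constructor
      · intro j'
        have := card_filter_comp_perm σ (fun i => B i = j')
        calc (univ.filter fun i => (Equiv.arrowCongr σ.symm (Equiv.refl (Fin n)) B) i = j').card
            = (univ.filter fun i => B (σ i) = j').card := by
              apply Finset.card_bij (fun a _ => a) <;> simp [happ]
          _ = _ := by rw [this]; exact h1 j'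
      · intro i hi
        rw [happ]
        exact h2 _ (hmem i hi)
    · rintro ⟨h1, h2⟩
      constructor
      · intro j'
        have := card_filter_comp_perm σ (fun i => B i = j')
        have h1' := h1 j'
        calc (univ.filter fun i => B i = j').card
            = (univ.filter fun i => B (σ i) = j').card := this.symm
          _ = (univ.filter fun i => (Equiv.arrowCongr σ.symm (Equiv.refl (Fin n)) B) i = j').card := by
              apply Finset.card_bij (fun a _ => a) <;> simp [happ]
          _ = d / n := h1'
      · intro i hi
        have := h2 (σ.symm i) (hmem' i hi)
        rwa [happ, Equiv.apply_symm_apply] at this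
  have hsum : ∑ A' ∈ Finset.powersetCard r (univ : Finset (Fin d)),
      (P.filter (fun B => ∀ i ∈ A', B i = j)).card = P.card * (d / n).choose r := by
    have step1 : ∀ A' : Finset (Fin d), (P.filter (fun B => ∀ i ∈ A', B i = j)).card
        = ∑ B ∈ P, if (∀ i ∈ A', B i = j) then 1 else 0 := fun A' => Finset.card_filter _ _
    calc ∑ A' ∈ Finset.powersetCard r (univ : Finset (Fin d)),
        (P.filter (fun B => ∀ i ∈ A', B i = j)).card
        = ∑ B ∈ P, ∑ A' ∈ Finset.powersetCard r (univ : Finset (Fin d)),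
            if (∀ i ∈ A', B i = j) then 1 else 0 := by
          rw [Finset.sum_congr rfl fun A' _ => step1 A']; exact Finset.sum_comm
      _ = ∑ B ∈ P, ((Finset.powersetCard r (univ : Finset (Fin d))).filter
            (fun A' => ∀ i ∈ A', B i = j)).card := by
          refine Finset.sum_congr rfl fun B _ => (Finset.card_filter _ _).symm
      _ = ∑ B ∈ P, (d / n).choose r := by
          refine Finset.sum_congr rfl fun B hB => ?_
          have hfib : (univ.filter (fun i => B i = j)).card = d / n := by
            rw [hP] at hB; exact (Finset.mem_filter.mp hB).2 j
          have hset : (Finset.powersetCard r (univ : Finset (Fin d))).filter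
              (fun A' => ∀ i ∈ A', B i = j) = Finset.powersetCard r (univ.filter (fun i => B i = j)) := by
            ext A'
            simp only [Finset.mem_filter, Finset.mem_powersetCard, Finset.subset_iff,
              Finset.mem_univ, true_and]
            constructor
            · rintro ⟨⟨-, hcard⟩, hall⟩
              exact ⟨fun {x} hx => hall x hx, hcard⟩
            · rintro ⟨hsub, hcard⟩
              exact ⟨⟨fun {x} _ => trivial, hcard⟩, fun i hi => hsub i hi⟩
          rw [hset, Finset.card_powersetCard, hfib]
      _ = P.card * (d / n).choose r := by rw [Finset.sum_const, smul_eq_mul]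
  have hconst : ∑ A' ∈ Finset.powersetCard r (univ : Finset (Fin d)),
      (P.filter (fun B => ∀ i ∈ A', B i = j)).card
      = d.choose r * (P.filter (fun B => ∀ i ∈ A, B i = j)).card := by
    rw [Finset.sum_congr rfl fun A' hA' => inv A' (Finset.mem_powersetCard.mp hA').2,
      Finset.sum_const, smul_eq_mul, Finset.card_powersetCard, Finset.card_univ,
      Fintype.card_fin]
  rw [hconst] at hsum
  rw [mul_comm]
  exact hsum

private lemma choose_mul_pow_le (m n r : ℕ) (hn : 0 < n) :
    m.choose r * n ^ r ≤ (n * m).choose r := by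
  have h1 : m.descFactorial r * n ^ r ≤ (n * m).descFactorial r := by
    rw [Nat.descFactorial_eq_prod_range, Nat.descFactorial_eq_prod_range,
      ← Finset.card_range r, ← Finset.prod_const, Finset.card_range, ← Finset.prod_mul_distrib]
    refine Finset.prod_le_prod' fun i _ => ?_
    calc (m - i) * n = m * n - i * n := by rw [Nat.sub_mul]
      _ ≤ m * n - i := Nat.sub_le_sub_left (Nat.le_mul_of_pos_right i hn) _
      _ = n * m - i := by rw [mul_comm]
  rw [Nat.descFactorial_eq_factorial_mul_choose, Nat.descFactorial_eq_factorial_mul_choose] at h1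
  have := Nat.factorial_pos r
  calc m.choose r * n ^ r = (r.factorial * (m.choose r * n ^ r)) / r.factorial := by
        rw [Nat.mul_div_cancel_left _ this]
    _ ≤ (r.factorial * (n*m).choose r) / r.factorial := by
        apply Nat.div_le_div_right; rw [← mul_assoc]; exact h1
    _ = (n*m).choose r := Nat.mul_div_cancel_left _ this

private lemma partitions_nonempty {d n m : ℕ} (hm0 : 0 < m) (hnm : n * m = d) :
    (Finset.univ.filter
        (fun B : Fin d → Fin n =>
          ∀ j : Fin n, (Finset.univ.filter (fun i => B i = j)).card = m)).Nonempty := by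
  refine ⟨fun i => ⟨(i : ℕ) / m, (Nat.div_lt_iff_lt_mul hm0).mpr (hnm ▸ i.isLt)⟩, ?_⟩
  simp only [Finset.mem_filter, Finset.mem_univ, true_and]
  intro j
  suffices h : (Finset.univ.filter
      (fun i : Fin d => (⟨(i : ℕ) / m, (Nat.div_lt_iff_lt_mul hm0).mpr (hnm ▸ i.isLt)⟩ : Fin n) = j)).card
      = (Finset.range m).card by simpa using h
  refine Finset.card_nbij' (fun i : Fin d => (i : ℕ) % m)
    (fun a => (⟨m * (j : ℕ) + a % m, ?_⟩ : Fin d)) ?_ ?_ ?_ ?_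
  · calc m * (j : ℕ) + a % m < m * (j : ℕ) + m := by
          have := Nat.mod_lt a hm0; omega
      _ = m * ((j : ℕ) + 1) := by ring
      _ ≤ m * n := Nat.mul_le_mul_left m j.isLt
      _ = d := by rw [mul_comm]; exact hnm
  · intro i hi
    simp only [Finset.mem_coe, Finset.mem_range]
    exact Nat.mod_lt _ hm0
  · intro a ha
    simp only [Finset.mem_coe, Finset.mem_range] at ha
    simp only [Finset.mem_coe, Finset.mem_filter, Finset.mem_univ, true_and]
    apply Fin.ext
    simp only []
    rw [Nat.mod_eq_of_lt ha, Nat.mul_add_div hm0, Nat.div_eq_of_lt ha, add_zero]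
  · intro i hi
    simp only [Finset.mem_coe, Finset.mem_filter, Finset.mem_univ, true_and] at hi
    apply Fin.ext
    have h3 : ((i : ℕ) / m) = (j : ℕ) := by
      have := congrArg Fin.val hi; simpa using this
    have h2 := Nat.div_add_mod (i : ℕ) m
    rw [h3] at h2
    simp only []
    rw [Nat.mod_mod_of_dvd _ dvd_rfl]
    exact h2
  · intro a ha
    simp only [Finset.mem_coe, Finset.mem_range] at ha
    simp only []
    rw [Nat.mul_add_mod, Nat.mod_mod_of_dvd _ dvd_rfl, Nat.mod_eq_of_lt ha]

/-- The `L²` norm of the restriction of `x` to the `j`-th block. -/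
noncomputable def blockL2 {d n : ℕ} (B : Fin d → Fin n) (x : Fin d → ℝ) (j : Fin n) : ℝ :=
  Real.sqrt (∑ i ∈ Finset.univ.filter (fun i => B i = j), (x i) ^ 2)

set_option maxHeartbeats 2000000 in
/-- For a `0-1` vector `c` with at most `S` nonzero coordinates and a uniformly random
partition of `[d]` into `n` equal-size blocks, the expected square of the dual block norm
satisfies `E[(max_j ‖c_{B_j}‖₂)²] ≤ 6 max{S/n, ln n}`. -/
theorem expected_sq_dual_blockNorm_of_sparse {d n S : ℕ} (hd : 0 < d) (hn : 0 < n)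
    (hS : 0 < S) (hSd : S ≤ d) (hdvd : n ∣ d)
    (c : Fin d → ℝ) (hc : ∀ i, c i = 0 ∨ c i = 1)
    (hsparse : (Finset.univ.filter (fun i => c i ≠ 0)).card ≤ S) :
    -- `P` is the set of equal-size partitions of `[d]` into `n` blocks
    let P : Finset (Fin d → Fin n) :=
      Finset.univ.filter
        (fun B => ∀ j : Fin n, (Finset.univ.filter (fun i => B i = j)).card = d / n)
    (∑ B ∈ P,
        (Finset.univ.sup' (Finset.univ_nonempty_iff.mpr ⟨⟨0, hn⟩⟩)
          (fun j => blockL2 B c j)) ^ 2) / (P.card : ℝ)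
      ≤ 6 * max ((S : ℝ) / n) (Real.log n) := by
  classical
  intro P
  have hnm : n * (d / n) = d := Nat.mul_div_cancel' hdvd
  have hm0 : 0 < d / n := Nat.div_pos (Nat.le_of_dvd hd hdvd) hn
  have hne : (Finset.univ : Finset (Fin n)).Nonempty := Finset.univ_nonempty_iff.mpr ⟨⟨0, hn⟩⟩
  set T : Finset (Fin d) := Finset.univ.filter (fun i => c i ≠ 0) with hT
  set t := T.card with ht
  have htS : t ≤ S := hsparse
  set k : (Fin d → Fin n) → Fin n → ℕ :=
    fun B j => (Finset.univ.filter (fun i => c i ≠ 0 ∧ B i = j)).card with hk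
  -- P is nonempty
  have hPne : P.Nonempty := partitions_nonempty hm0 hnm
  have hPcard : (0:ℝ) < P.card := by exact_mod_cast Finset.card_pos.mpr hPne
  -- rewrite blockL2
  have hblock : ∀ (B : Fin d → Fin n) (j : Fin n), blockL2 B c j = Real.sqrt (k B j) := by
    intro B j
    unfold blockL2
    congr 1
    calc ∑ i ∈ Finset.univ.filter (fun i => B i = j), (c i) ^ 2
        = ∑ i ∈ Finset.univ.filter (fun i => B i = j), (if c i ≠ 0 then (1:ℝ) else 0) := by
          refine Finset.sum_congr rfl fun i _ => ?_
          rcases hc i with h | h <;> simp [h]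
      _ = ((Finset.univ.filter (fun i => B i = j)).filter (fun i => c i ≠ 0)).card := by
          rw [Finset.sum_boole]
      _ = ((k B j : ℕ) : ℝ) := by
          rw [Finset.filter_filter]
          congr 1
          refine congrArg Finset.card (Finset.filter_congr fun i _ => ?_)
          exact and_comm
  -- the squared sup
  have hsup : ∀ B : Fin d → Fin n,
      (Finset.univ.sup' hne (fun j => blockL2 B c j)) ^ 2
        = Finset.univ.sup' hne (fun j => ((k B j : ℕ) : ℝ)) := by
    intro B
    have hmax : ∀ x y : ℝ, Real.sqrt (x ⊔ y) = Real.sqrt x ⊔ Real.sqrt y := by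
      intro x y
      rcases le_total x y with h | h
      · rw [max_eq_right h, max_eq_right (Real.sqrt_le_sqrt h)]
      · rw [max_eq_left h, max_eq_left (Real.sqrt_le_sqrt h)]
    have h0 : Finset.univ.sup' hne (fun j => blockL2 B c j)
        = Finset.univ.sup' hne (fun j => Real.sqrt ((k B j : ℕ) : ℝ)) :=
      Finset.sup'_congr hne rfl fun j _ => hblock B j
    have h1 : Finset.univ.sup' hne (fun j => Real.sqrt ((k B j : ℕ) : ℝ))
        = Real.sqrt (Finset.univ.sup' hne (fun j => ((k B j : ℕ) : ℝ))) :=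
      (Finset.comp_sup'_eq_sup'_comp hne Real.sqrt hmax).symm
    rw [h0, h1, Real.sq_sqrt]
    obtain ⟨j0, hj0⟩ := hne
    exact le_trans (Nat.cast_nonneg (k B j0))
      (Finset.le_sup' (fun j => ((k B j : ℕ) : ℝ)) hj0)
  -- pointwise bound by log-sum-exp
  have hF : ∀ B : Fin d → Fin n, (0:ℝ) < ∑ j : Fin n, Real.exp ((k B j : ℕ) : ℝ) :=
    fun B => Finset.sum_pos (fun j _ => Real.exp_pos _) hne
  have hptw : ∀ B : Fin d → Fin n,
      Finset.univ.sup' hne (fun j => ((k B j : ℕ) : ℝ))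
        ≤ Real.log (∑ j : Fin n, Real.exp ((k B j : ℕ) : ℝ)) := by
    intro B
    obtain ⟨j0, hj0mem, hj0⟩ := Finset.exists_mem_eq_sup' hne (fun j => ((k B j : ℕ) : ℝ))
    rw [hj0, Real.le_log_iff_exp_le (hF B)]
    exact Finset.single_le_sum (f := fun j => Real.exp ((k B j : ℕ) : ℝ))
      (fun j _ => (Real.exp_pos _).le) hj0mem
  -- the counting identity
  have hkey : ∀ (j : Fin n) (r : ℕ),
      (∑ B ∈ P, (k B j).choose r) * d.choose r
        = P.card * ((d / n).choose r * t.choose r) := by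
    intro j r
    have h1 : ∀ B : Fin d → Fin n, (k B j).choose r
        = ((Finset.powersetCard r T).filter (fun A => ∀ i ∈ A, B i = j)).card := by
      intro B
      rw [hk, ← Finset.card_powersetCard]
      congr 1
      ext A
      simp only [Finset.mem_powersetCard, Finset.mem_filter, Finset.subset_iff,
        Finset.mem_filter, Finset.mem_univ, true_and, hT]
      constructor
      · rintro ⟨hsub, hcard⟩
        exact ⟨⟨fun {x} hx => (hsub hx).1, hcard⟩, fun i hi => (hsub hi).2⟩
      · rintro ⟨⟨hsub, hcard⟩, hall⟩
        exact ⟨fun {x} hx => ⟨hsub hx, hall x hx⟩, hcard⟩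
    have h2 : ∑ B ∈ P, (k B j).choose r
        = ∑ A ∈ Finset.powersetCard r T, (P.filter (fun B => ∀ i ∈ A, B i = j)).card := by
      calc ∑ B ∈ P, (k B j).choose r
          = ∑ B ∈ P, ∑ A ∈ Finset.powersetCard r T, if (∀ i ∈ A, B i = j) then 1 else 0 := by
            exact Finset.sum_congr rfl fun B _ => by rw [h1 B, Finset.card_filter]
        _ = ∑ A ∈ Finset.powersetCard r T, ∑ B ∈ P, if (∀ i ∈ A, B i = j) then 1 else 0 :=
            Finset.sum_comm
        _ = _ := Finset.sum_congr rfl fun A _ => (Finset.card_filter _ _).symm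
    rw [h2, Finset.sum_mul]
    calc ∑ A ∈ Finset.powersetCard r T,
          (P.filter (fun B => ∀ i ∈ A, B i = j)).card * d.choose r
        = ∑ A ∈ Finset.powersetCard r T, P.card * (d / n).choose r := by
          refine Finset.sum_congr rfl fun A hA => ?_
          have hAr : A.card = r := (Finset.mem_powersetCard.mp hA).2
          have := partition_count j A
          rw [hAr] at this
          exact this
      _ = t.choose r * (P.card * (d / n).choose r) := by
          rw [Finset.sum_const, smul_eq_mul, Finset.card_powersetCard, ht]
      _ = P.card * ((d / n).choose r * t.choose r) := by ring
  have hkBt : ∀ (B : Fin d → Fin n) (j : Fin n), k B j ≤ t := by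
    intro B j
    refine Finset.card_le_card fun i hi => ?_
    simp only [hk, Finset.mem_filter, Finset.mem_univ, true_and] at hi
    simp only [hT, Finset.mem_filter, Finset.mem_univ, true_and]
    exact hi.1
  -- basic positivity facts
  have he1 : (1:ℝ) ≤ Real.exp 1 - 1 := by
    have := Real.add_one_le_exp (1:ℝ)
    linarith
  have he0 : (0:ℝ) ≤ Real.exp 1 - 1 := by linarith
  have hx0 : (0:ℝ) ≤ (Real.exp 1 - 1) * ((S:ℝ)/n) := by positivity
  -- per-term bound
  have hterm : ∀ (j : Fin n) (r : ℕ), r ≤ d →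
      (∑ B ∈ P, ((k B j).choose r : ℝ)) * (Real.exp 1 - 1) ^ r
        ≤ P.card * ((Real.exp 1 - 1) * ((S:ℝ)/n)) ^ r / r.factorial := by
    intro j r hrd
    have h3 : (d / n).choose r * n ^ r ≤ d.choose r := by
      calc (d / n).choose r * n ^ r ≤ (n * (d / n)).choose r := choose_mul_pow_le _ n r hn
        _ = d.choose r := by rw [hnm]
    have h4 : r.factorial * t.choose r ≤ S ^ r := by
      calc r.factorial * t.choose r = t.descFactorial r :=
            (Nat.descFactorial_eq_factorial_mul_choose t r).symm
        _ ≤ t ^ r := Nat.descFactorial_le_pow t r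
        _ ≤ S ^ r := Nat.pow_le_pow_left htS r
    have h5 : (∑ B ∈ P, (k B j).choose r) * (r.factorial * n ^ r) * d.choose r
        ≤ (P.card * S ^ r) * d.choose r := by
      calc (∑ B ∈ P, (k B j).choose r) * (r.factorial * n ^ r) * d.choose r
          = ((∑ B ∈ P, (k B j).choose r) * d.choose r) * (r.factorial * n ^ r) := by ring
        _ = P.card * ((d / n).choose r * t.choose r) * (r.factorial * n ^ r) := by rw [hkey j r]
        _ = P.card * (((d / n).choose r * n ^ r) * (r.factorial * t.choose r)) := by ring
        _ ≤ P.card * (d.choose r * S ^ r) :=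
            Nat.mul_le_mul_left _ (Nat.mul_le_mul h3 h4)
        _ = (P.card * S ^ r) * d.choose r := by ring
    have h6 : (∑ B ∈ P, (k B j).choose r) * (r.factorial * n ^ r) ≤ P.card * S ^ r :=
      Nat.le_of_mul_le_mul_right h5 (Nat.choose_pos hrd)
    have h6R : (∑ B ∈ P, ((k B j).choose r : ℝ)) * ((r.factorial : ℝ) * (n:ℝ) ^ r)
        ≤ (P.card : ℝ) * (S : ℝ) ^ r := by exact_mod_cast h6
    have hrf : (0:ℝ) < r.factorial := by exact_mod_cast Nat.factorial_pos r
    have hnr : (0:ℝ) < (n:ℝ) ^ r := by positivity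
    rw [le_div_iff₀ hrf]
    have hrhs : P.card * ((Real.exp 1 - 1) * ((S:ℝ)/n)) ^ r
        = (P.card * (S:ℝ) ^ r) * ((Real.exp 1 - 1) ^ r / ((n:ℝ) ^ r)) := by
      rw [mul_pow, div_pow]
      ring
    rw [hrhs, show (P.card : ℝ) * (S:ℝ) ^ r * ((Real.exp 1 - 1) ^ r / ((n:ℝ) ^ r))
      = ((P.card : ℝ) * (S:ℝ) ^ r * (Real.exp 1 - 1) ^ r) / ((n:ℝ) ^ r) by ring,
      le_div_iff₀ hnr]
    calc (∑ B ∈ P, ((k B j).choose r : ℝ)) * (Real.exp 1 - 1) ^ r * r.factorial * (n:ℝ) ^ r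
        = ((∑ B ∈ P, ((k B j).choose r : ℝ)) * ((r.factorial : ℝ) * (n:ℝ) ^ r))
            * (Real.exp 1 - 1) ^ r := by ring
      _ ≤ ((P.card : ℝ) * (S:ℝ) ^ r) * (Real.exp 1 - 1) ^ r :=
          mul_le_mul_of_nonneg_right h6R (pow_nonneg he0 r)
      _ = (P.card : ℝ) * (S:ℝ) ^ r * (Real.exp 1 - 1) ^ r := by ring
  -- expansion of exp into binomial sums
  have hexp_eq : ∀ (B : Fin d → Fin n) (j : Fin n),
      Real.exp ((k B j : ℕ) : ℝ)
        = ∑ r ∈ Finset.range (t + 1), ((k B j).choose r : ℝ) * (Real.exp 1 - 1) ^ r := by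
    intro B j
    have h1 : Real.exp ((k B j : ℕ) : ℝ) = (Real.exp 1) ^ (k B j) := by
      rw [← Real.exp_nat_mul, mul_one]
    rw [h1, show Real.exp 1 = (Real.exp 1 - 1) + 1 by ring, add_pow]
    simp only [one_pow, mul_one]
    rw [← Finset.sum_subset (Finset.range_subset_range.mpr
      (by have := hkBt B j; omega : k B j + 1 ≤ t + 1))]
    · exact Finset.sum_congr rfl fun r _ => by ring
    · intro r hr hnr
      simp only [Finset.mem_range] at hr hnr
      rw [Nat.choose_eq_zero_of_lt (by omega)]
      simp
  -- the moment-generating-function bound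
  have hD : ∀ j : Fin n, ∑ B ∈ P, Real.exp ((k B j : ℕ) : ℝ)
      ≤ P.card * Real.exp ((Real.exp 1 - 1) * ((S:ℝ)/n)) := by
    intro j
    calc ∑ B ∈ P, Real.exp ((k B j : ℕ) : ℝ)
        = ∑ B ∈ P, ∑ r ∈ Finset.range (t + 1), ((k B j).choose r : ℝ) * (Real.exp 1 - 1) ^ r :=
          Finset.sum_congr rfl fun B _ => hexp_eq B j
      _ = ∑ r ∈ Finset.range (t + 1),
            (∑ B ∈ P, ((k B j).choose r : ℝ)) * (Real.exp 1 - 1) ^ r := by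
          rw [Finset.sum_comm]
          exact Finset.sum_congr rfl fun r _ => by rw [Finset.sum_mul]
      _ ≤ ∑ r ∈ Finset.range (t + 1),
            P.card * ((Real.exp 1 - 1) * ((S:ℝ)/n)) ^ r / r.factorial := by
          refine Finset.sum_le_sum fun r hr => ?_
          have hrd : r ≤ d := by
            have := Finset.mem_range.mp hr
            omega
          exact hterm j r hrd
      _ = P.card * ∑ r ∈ Finset.range (t + 1),
            ((Real.exp 1 - 1) * ((S:ℝ)/n)) ^ r / r.factorial := by
          rw [Finset.mul_sum]
          exact Finset.sum_congr rfl fun r _ => by ring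
      _ ≤ P.card * Real.exp ((Real.exp 1 - 1) * ((S:ℝ)/n)) := by
          refine mul_le_mul_of_nonneg_left ?_ hPcard.le
          exact Real.sum_le_exp_of_nonneg hx0 _
  -- Jensen's inequality for the logarithm
  have hJ : (∑ B ∈ P, Finset.univ.sup' hne (fun j => ((k B j : ℕ) : ℝ))) / P.card
      ≤ Real.log ((∑ B ∈ P, ∑ j : Fin n, Real.exp ((k B j : ℕ) : ℝ)) / P.card) := by
    have hw : ∑ _B ∈ P, (P.card : ℝ)⁻¹ = 1 := by
      rw [Finset.sum_const, nsmul_eq_mul, mul_inv_cancel₀ (ne_of_gt hPcard)]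
    have hcc := (strictConcaveOn_log_Ioi.concaveOn).le_map_sum
      (w := fun _ => (P.card : ℝ)⁻¹)
      (p := fun B => ∑ j : Fin n, Real.exp ((k B j : ℕ) : ℝ)) (t := P)
      (fun _ _ => by positivity) hw (fun B _ => hF B)
    simp only [smul_eq_mul] at hcc
    calc (∑ B ∈ P, Finset.univ.sup' hne (fun j => ((k B j : ℕ) : ℝ))) / P.card
        = ∑ B ∈ P, (P.card:ℝ)⁻¹ * Finset.univ.sup' hne (fun j => ((k B j : ℕ) : ℝ)) := by
          rw [Finset.sum_div]; exact Finset.sum_congr rfl fun B _ => by ring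
      _ ≤ ∑ B ∈ P, (P.card:ℝ)⁻¹ * Real.log (∑ j : Fin n, Real.exp ((k B j : ℕ) : ℝ)) :=
          Finset.sum_le_sum fun B _ =>
            mul_le_mul_of_nonneg_left (hptw B) (by positivity)
      _ ≤ Real.log (∑ B ∈ P, (P.card:ℝ)⁻¹ * ∑ j : Fin n, Real.exp ((k B j : ℕ) : ℝ)) := hcc
      _ = Real.log ((∑ B ∈ P, ∑ j : Fin n, Real.exp ((k B j : ℕ) : ℝ)) / P.card) := by
          congr 1
          rw [Finset.sum_div]
          exact Finset.sum_congr rfl fun B _ => by ring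
  -- averaging the exponential bound
  have hsum_exp : (∑ B ∈ P, ∑ j : Fin n, Real.exp ((k B j : ℕ) : ℝ)) / P.card
      ≤ n * Real.exp ((Real.exp 1 - 1) * ((S:ℝ)/n)) := by
    rw [div_le_iff₀ hPcard]
    calc ∑ B ∈ P, ∑ j : Fin n, Real.exp ((k B j : ℕ) : ℝ)
        = ∑ j : Fin n, ∑ B ∈ P, Real.exp ((k B j : ℕ) : ℝ) := Finset.sum_comm
      _ ≤ ∑ j : Fin n, (P.card : ℝ) * Real.exp ((Real.exp 1 - 1) * ((S:ℝ)/n)) :=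
          Finset.sum_le_sum fun j _ => hD j
      _ = n * Real.exp ((Real.exp 1 - 1) * ((S:ℝ)/n)) * P.card := by
          rw [Finset.sum_const, Finset.card_univ, Fintype.card_fin, nsmul_eq_mul]; ring
  -- final arithmetic
  have hM1 : Real.log n ≤ max ((S : ℝ) / n) (Real.log n) := le_max_right _ _
  have hM2 : (S:ℝ)/n ≤ max ((S : ℝ) / n) (Real.log n) := le_max_left _ _
  have hM0 : 0 ≤ max ((S : ℝ) / n) (Real.log n) :=
    le_trans (Real.log_nonneg (by exact_mod_cast hn)) hM1
  have hee : Real.exp 1 - 1 ≤ 2 := by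
    have := Real.exp_one_lt_d9
    linarith
  have hSn : (0:ℝ) ≤ (S:ℝ)/n := by positivity
  calc (∑ B ∈ P, (Finset.univ.sup' (Finset.univ_nonempty_iff.mpr ⟨⟨0, hn⟩⟩)
          (fun j => blockL2 B c j)) ^ 2) / (P.card : ℝ)
      = (∑ B ∈ P, Finset.univ.sup' hne (fun j => ((k B j : ℕ) : ℝ))) / P.card := by
        rw [Finset.sum_congr rfl fun B _ => hsup B]
    _ ≤ Real.log ((∑ B ∈ P, ∑ j : Fin n, Real.exp ((k B j : ℕ) : ℝ)) / P.card) := hJ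
    _ ≤ Real.log (n * Real.exp ((Real.exp 1 - 1) * ((S:ℝ)/n))) :=
        Real.log_le_log (div_pos (Finset.sum_pos (fun B _ => hF B) hPne) hPcard) hsum_exp
    _ = Real.log n + (Real.exp 1 - 1) * ((S:ℝ)/n) := by
        rw [Real.log_mul (by exact_mod_cast hn.ne') (Real.exp_ne_zero _), Real.log_exp]
    _ ≤ max ((S : ℝ) / n) (Real.log n) + 2 * max ((S : ℝ) / n) (Real.log n) := by
        have h7 : (Real.exp 1 - 1) * ((S:ℝ)/n) ≤ 2 * max ((S : ℝ) / n) (Real.log n) := by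
          calc (Real.exp 1 - 1) * ((S:ℝ)/n) ≤ 2 * ((S:ℝ)/n) :=
                mul_le_mul_of_nonneg_right hee hSn
            _ ≤ 2 * max ((S : ℝ) / n) (Real.log n) := by linarith
        linarith
    _ ≤ 6 * max ((S : ℝ) / n) (Real.log n) := by linarith
end

section
/- Let X_1,...,X_N be negatively associated mean-zero random variables with |X_i| ≤ 1 almost surely, and z_1,...,z_N ≥ 0 constants. Then for all δ > 0, P(Σ_i z_i X_i ≥ δ) ≤ exp(−3δ² / (2δ max_i z_i + 6 Σ_i z_i² E[X_i²])). -/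
open Finset Real MeasureTheory

lemma myexp_tsum (x : ℝ) : Real.exp x = ∑' n : ℕ, x ^ n / (Nat.factorial n : ℝ) := by
  rw [Real.exp_eq_exp_ℝ, NormedSpace.exp_eq_tsum_div]

lemma mytail (t : ℝ) : Real.exp t - 1 - t = ∑' n : ℕ, t ^ (n + 2) / (Nat.factorial (n + 2) : ℝ) := by
  have h := Summable.sum_add_tsum_nat_add (f := fun n : ℕ => t ^ n / (Nat.factorial n : ℝ)) 2
    (Real.summable_pow_div_factorial t)
  rw [myexp_tsum t, ← h]
  simp [Finset.sum_range_succ]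
  ring

lemma fact_ge (n : ℕ) : 2 * 3 ^ n ≤ Nat.factorial (n + 2) := by
  induction n with
  | zero => simp [Nat.factorial]
  | succ k ih =>
    have : Nat.factorial (k + 3) = (k + 3) * Nat.factorial (k + 2) := rfl
    rw [this, pow_succ]
    calc 2 * (3 ^ k * 3) = 3 * (2 * 3 ^ k) := by ring
    _ ≤ (k + 3) * Nat.factorial (k + 2) := by
        exact Nat.mul_le_mul (by omega) ih

lemma key1 {t y : ℝ} (ht : 0 ≤ t) (hy : |y| ≤ 1) :
    Real.exp (t * y) ≤ 1 + t * y + y ^ 2 * (Real.exp t - 1 - t) := by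
  have hs1 : Summable (fun n : ℕ => (t * y) ^ (n + 2) / (Nat.factorial (n + 2) : ℝ)) :=
    (summable_nat_add_iff 2).2 (Real.summable_pow_div_factorial (t * y))
  have hs2 : Summable (fun n : ℕ => y ^ 2 * (t ^ (n + 2) / (Nat.factorial (n + 2) : ℝ))) :=
    ((summable_nat_add_iff 2).2 (Real.summable_pow_div_factorial t)).mul_left _
  have hse : Real.exp (t * y) = 1 + t * y +
      ∑' n : ℕ, (t * y) ^ (n + 2) / (Nat.factorial (n + 2) : ℝ) := by
    have h := Summable.sum_add_tsum_nat_add (f := fun n : ℕ => (t * y) ^ n / (Nat.factorial n : ℝ)) 2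
      (Real.summable_pow_div_factorial (t * y))
    rw [myexp_tsum (t * y), ← h]
    simp [Finset.sum_range_succ]
  rw [hse, mytail, ← tsum_mul_left]
  have hterm : ∀ n : ℕ, (t * y) ^ (n + 2) / (Nat.factorial (n + 2) : ℝ)
      ≤ y ^ 2 * (t ^ (n + 2) / (Nat.factorial (n + 2) : ℝ)) := by
    intro n
    rw [mul_div_assoc']
    apply div_le_div_of_nonneg_right _ (by positivity)
    · calc (t * y) ^ (n + 2) = t ^ (n + 2) * y ^ (n + 2) := by ring
      _ ≤ t ^ (n + 2) * y ^ 2 := by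
          apply mul_le_mul_of_nonneg_left _ (by positivity)
          calc y ^ (n + 2) ≤ |y ^ (n + 2)| := le_abs_self _
          _ = |y| ^ (n + 2) := by rw [abs_pow]
          _ ≤ |y| ^ 2 := pow_le_pow_of_le_one (abs_nonneg y) hy (by omega)
          _ = y ^ 2 := sq_abs y
      _ = y ^ 2 * t ^ (n + 2) := by ring
  exact add_le_add (le_refl _) (Summable.tsum_le_tsum hterm hs1 hs2)

lemma key2 {t : ℝ} (ht : 0 ≤ t) (ht3 : t < 3) :
    Real.exp t - 1 - t ≤ t ^ 2 / (2 * (1 - t / 3)) := by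
  have h0 : (0:ℝ) ≤ t / 3 := by linarith
  have h1 : t / 3 < 1 := by linarith
  have hgeo : Summable (fun n : ℕ => (t / 3) ^ n) := summable_geometric_of_lt_one h0 h1
  have hrhs : t ^ 2 / (2 * (1 - t / 3)) = ∑' n : ℕ, (t ^ 2 / 2) * (t / 3) ^ n := by
    rw [tsum_mul_left, tsum_geometric_of_lt_one h0 h1]
    have : (1 - t/3) ≠ 0 := by linarith
    field_simp
  rw [mytail, hrhs]
  refine Summable.tsum_le_tsum (fun n => ?_)
    ((summable_nat_add_iff 2).2 (Real.summable_pow_div_factorial t)) (hgeo.mul_left _)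
  have : t ^ 2 / 2 * (t / 3) ^ n = t ^ (n + 2) / (2 * 3 ^ n) := by
    rw [div_pow]
    field_simp
    ring
  rw [this]
  have hfac : (2 * 3 ^ n : ℝ) ≤ (Nat.factorial (n + 2) : ℝ) := by
    have := fact_ge n
    exact_mod_cast by exact_mod_cast this
  gcongr

lemma int_of_bound {Ω : Type*} [MeasurableSpace Ω] {μ : Measure Ω} [IsFiniteMeasure μ]
    {f : Ω → ℝ} (hm : AEStronglyMeasurable f μ) {C : ℝ} (h : ∀ᵐ ω ∂μ, |f ω| ≤ C) :
    Integrable f μ :=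
  (integrable_const C).mono' hm (by simpa [Real.norm_eq_abs] using h)

lemma key3 {Ω : Type*} [MeasurableSpace Ω] (μ : Measure Ω) [IsProbabilityMeasure μ]
    {Y : Ω → ℝ} (hm : Measurable Y) (h0 : ∫ ω, Y ω ∂μ = 0)
    (hb : ∀ᵐ ω ∂μ, |Y ω| ≤ 1) {t : ℝ} (ht : 0 ≤ t) :
    ∫ ω, Real.exp (t * Y ω) ∂μ
      ≤ Real.exp ((∫ ω, (Y ω) ^ 2 ∂μ) * (Real.exp t - 1 - t)) := by
  set c := Real.exp t - 1 - t with hc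
  have hY : Integrable Y μ := int_of_bound hm.aestronglyMeasurable hb
  have hY2 : Integrable (fun ω => (Y ω) ^ 2) μ := by
    refine int_of_bound (C := 1) (hm.pow_const 2).aestronglyMeasurable (hb.mono fun ω h => ?_)
    rw [abs_pow, ← one_pow 2]
    exact pow_le_pow_left₀ (abs_nonneg _) h 2
  have hE : Integrable (fun ω => Real.exp (t * Y ω)) μ := by
    refine int_of_bound (hm.const_mul t).exp.aestronglyMeasurable
      (C := Real.exp t) (hb.mono fun ω h => ?_)
    rw [abs_of_pos (Real.exp_pos _), Real.exp_le_exp]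
    calc t * Y ω ≤ t * 1 := mul_le_mul_of_nonneg_left (le_trans (le_abs_self _) h) ht
    _ = t := mul_one t
  have h1 : Integrable (fun ω => 1 + t * Y ω) μ := (integrable_const 1).add (hY.const_mul t)
  have hRint : Integrable (fun ω => 1 + t * Y ω + (Y ω) ^ 2 * c) μ :=
    h1.add (hY2.mul_const c)
  have step : ∫ ω, Real.exp (t * Y ω) ∂μ ≤ ∫ ω, (1 + t * Y ω + (Y ω) ^ 2 * c) ∂μ :=
    integral_mono_ae hE hRint (hb.mono fun ω h => key1 ht h)
  have hval : ∫ ω, (1 + t * Y ω + (Y ω) ^ 2 * c) ∂μ = 1 + (∫ ω, (Y ω) ^ 2 ∂μ) * c := by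
    rw [integral_add h1 (hY2.mul_const c),
      integral_add (integrable_const 1) (hY.const_mul t),
      integral_const, integral_const_mul, integral_mul_const, h0]
    simp
  calc ∫ ω, Real.exp (t * Y ω) ∂μ ≤ 1 + (∫ ω, (Y ω) ^ 2 ∂μ) * c := by rw [← hval]; exact step
  _ ≤ Real.exp ((∫ ω, (Y ω) ^ 2 ∂μ) * c) := by
      rw [add_comm]; exact Real.add_one_le_exp _

/-- Bernstein's inequality for negatively associated random variables:
if `X_1, …, X_N` are negatively associated mean-zero random variables with `|X_i| ≤ 1`
a.s., and `z_i ≥ 0` are constants, then for all `δ > 0`,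
`P(Σ_i z_i X_i ≥ δ) ≤ exp(−3δ² / (2δ max_i z_i + 6 Σ_i z_i² E[X_i²]))`. -/
theorem bernstein_negatively_associated {Ω : Type*} [MeasurableSpace Ω]
    (μ : Measure Ω) [IsProbabilityMeasure μ]
    {N : ℕ} (hN : 0 < N) (X : Fin N → Ω → ℝ)
    (hmeas : ∀ i, Measurable (X i))
    (hmean : ∀ i, ∫ ω, X i ω ∂μ = 0)
    (hbdd : ∀ i, ∀ᵐ ω ∂μ, |X i ω| ≤ 1)
    -- negative association: for all disjoint index sets `I, J` and all coordinatewise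
    -- nondecreasing functions `f` (depending only on `I`) and `g` (depending only on `J`),
    -- `E[f(X) g(X)] ≤ E[f(X)] E[g(X)]`, i.e. `Cov(f(X), g(X)) ≤ 0`.
    (hNA : ∀ (I J : Finset (Fin N)), Disjoint I J →
      ∀ f g : (Fin N → ℝ) → ℝ, Monotone f → Monotone g →
        Measurable f → Measurable g →
        (∀ x y : Fin N → ℝ, (∀ i ∈ I, x i = y i) → f x = f y) →
        (∀ x y : Fin N → ℝ, (∀ j ∈ J, x j = y j) → g x = g y) →
        ∫ ω, f (fun i => X i ω) * g (fun i => X i ω) ∂μ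
          ≤ (∫ ω, f (fun i => X i ω) ∂μ) * ∫ ω, g (fun i => X i ω) ∂μ)
    (z : Fin N → ℝ) (hz : ∀ i, 0 ≤ z i) {δ : ℝ} (hδ : 0 < δ) :
    (μ {ω | δ ≤ ∑ i, z i * X i ω}).toReal
      ≤ Real.exp (-(3 * δ ^ 2) /
          (2 * δ * (Finset.univ.sup' (Finset.univ_nonempty_iff.mpr ⟨⟨0, hN⟩⟩) z)
            + 6 * ∑ i, (z i) ^ 2 * ∫ ω, (X i ω) ^ 2 ∂μ)) := by
  set M := Finset.univ.sup' (Finset.univ_nonempty_iff.mpr ⟨⟨0, hN⟩⟩) z with hMdef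
  set σ2 : Fin N → ℝ := fun i => ∫ ω, (X i ω) ^ 2 ∂μ with hσ2def
  set V := ∑ i, (z i) ^ 2 * σ2 i with hVdef
  have hσ2nn : ∀ i, 0 ≤ σ2 i := fun i => integral_nonneg fun ω => sq_nonneg _
  have hVterm : ∀ i, 0 ≤ (z i) ^ 2 * σ2 i := fun i => mul_nonneg (sq_nonneg _) (hσ2nn i)
  have hVnn : 0 ≤ V := Finset.sum_nonneg fun i _ => hVterm i
  have hzM : ∀ i, z i ≤ M := fun i => Finset.le_sup' z (Finset.mem_univ i)
  have hM0 : 0 ≤ M := le_trans (hz ⟨0, hN⟩) (hzM ⟨0, hN⟩)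
  have hX2int : ∀ i, Integrable (fun ω => (X i ω) ^ 2) μ := by
    intro i
    refine int_of_bound (C := 1) ((hmeas i).pow_const 2).aestronglyMeasurable
      ((hbdd i).mono fun ω h => ?_)
    rw [abs_pow, ← one_pow 2]
    exact pow_le_pow_left₀ (abs_nonneg _) h 2
  rcases eq_or_lt_of_le hVnn with hV | hV
  · -- degenerate case: V = 0, the sum is a.s. 0
    have hzero : ∀ i, ∀ᵐ ω ∂μ, z i * X i ω = 0 := by
      intro i
      have hterm0 : (z i) ^ 2 * σ2 i = 0 :=
        (Finset.sum_eq_zero_iff_of_nonneg fun i _ => hVterm i).1 hV.symm i (Finset.mem_univ i)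
      rcases mul_eq_zero.1 hterm0 with h | h
      · have : z i = 0 := by
          have := sq_eq_zero_iff.1 h; exact this
        filter_upwards with ω; rw [this, zero_mul]
      · have hX0 : ∀ᵐ ω ∂μ, (X i ω) ^ 2 = 0 := by
          have := (integral_eq_zero_iff_of_nonneg (fun ω => sq_nonneg (X i ω)) (hX2int i)).1 h
          filter_upwards [this] with ω hω using hω
        filter_upwards [hX0] with ω hω
        rw [pow_eq_zero_iff (by norm_num)] at hω
        rw [hω, mul_zero]
    have hsum0 : ∀ᵐ ω ∂μ, ∑ i, z i * X i ω = 0 := by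
      have := (ae_all_iff).2 hzero
      filter_upwards [this] with ω hω
      exact Finset.sum_eq_zero fun i _ => hω i
    have hnull : μ {ω | δ ≤ ∑ i, z i * X i ω} = 0 := by
      rw [measure_eq_zero_iff_ae_notMem]
      filter_upwards [hsum0] with ω hω
      simp only [Set.mem_setOf_eq, hω, not_le]
      exact hδ
    rw [hnull, ENNReal.toReal_zero]
    exact (Real.exp_pos _).le
  · -- main case : V > 0
    set K := 3 * V + M * δ with hKdef
    have hK : 0 < K := by nlinarith
    set l := 3 * δ / K with hldef
    have hl : 0 < l := by positivity
    have hden : 1 - l * M / 3 = 3 * V / K := by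
      rw [hldef]; field_simp; ring
    have hdenpos : 0 < 1 - l * M / 3 := by rw [hden]; positivity
    have hlM : l * M < 3 := by nlinarith
    have factor : ∀ i, ∫ ω, Real.exp (l * z i * X i ω) ∂μ
        ≤ Real.exp ((l * z i) ^ 2 * σ2 i / (2 * (1 - l * M / 3))) := by
      intro i
      have ht : 0 ≤ l * z i := mul_nonneg hl.le (hz i)
      have hlzM : l * z i ≤ l * M := mul_le_mul_of_nonneg_left (hzM i) hl.le
      have ht3 : l * z i < 3 := lt_of_le_of_lt hlzM hlM
      calc ∫ ω, Real.exp (l * z i * X i ω) ∂μ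
          ≤ Real.exp (σ2 i * (Real.exp (l * z i) - 1 - l * z i)) :=
            key3 μ (hmeas i) (hmean i) (hbdd i) ht
      _ ≤ Real.exp ((l * z i) ^ 2 * σ2 i / (2 * (1 - l * M / 3))) := by
          rw [Real.exp_le_exp]
          calc σ2 i * (Real.exp (l * z i) - 1 - l * z i)
              ≤ σ2 i * ((l * z i) ^ 2 / (2 * (1 - l * z i / 3))) :=
                mul_le_mul_of_nonneg_left (key2 ht ht3) (hσ2nn i)
          _ ≤ σ2 i * ((l * z i) ^ 2 / (2 * (1 - l * M / 3))) := by
              have h2 : (0:ℝ) < 2 * (1 - l * M / 3) := by linarith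
              have h3 : 2 * (1 - l * M / 3) ≤ 2 * (1 - l * z i / 3) := by linarith
              exact mul_le_mul_of_nonneg_left
                (div_le_div_of_nonneg_left (sq_nonneg _) h2 h3) (hσ2nn i)
          _ = (l * z i) ^ 2 * σ2 i / (2 * (1 - l * M / 3)) := by ring
    have prodNA : ∀ s : Finset (Fin N),
        ∫ ω, ∏ i ∈ s, Real.exp (l * z i * X i ω) ∂μ
          ≤ ∏ i ∈ s, ∫ ω, Real.exp (l * z i * X i ω) ∂μ := by
      intro s
      induction s using Finset.induction_on with
      | empty => simp
      | @insert a s ha ih =>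
        set f : (Fin N → ℝ) → ℝ := fun x => Real.exp (l * z a * x a) with hf
        set g : (Fin N → ℝ) → ℝ := fun x => ∏ i ∈ s, Real.exp (l * z i * x i) with hg
        have hmono_f : Monotone f := fun x y hxy =>
          Real.exp_le_exp.2 (mul_le_mul_of_nonneg_left (hxy a) (mul_nonneg hl.le (hz a)))
        have hmono_g : Monotone g := fun x y hxy =>
          Finset.prod_le_prod (fun i _ => (Real.exp_pos _).le)
            (fun i _ => Real.exp_le_exp.2
              (mul_le_mul_of_nonneg_left (hxy i) (mul_nonneg hl.le (hz i))))
        have hmf : Measurable f := ((measurable_pi_apply (X := fun _ : Fin N => ℝ) a).const_mul (l * z a)).exp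
        have hmg : Measurable g :=
          Finset.measurable_prod s fun i _ => ((measurable_pi_apply (X := fun _ : Fin N => ℝ) i).const_mul (l * z i)).exp
        have hdf : ∀ x y : Fin N → ℝ, (∀ i ∈ ({a} : Finset (Fin N)), x i = y i) → f x = f y :=
          fun x y h => by
            simp only [hf]
            rw [h a (Finset.mem_singleton_self a)]
        have hdg : ∀ x y : Fin N → ℝ, (∀ j ∈ s, x j = y j) → g x = g y :=
          fun x y h => Finset.prod_congr rfl fun i hi => by rw [h i hi]
        have hdisj : Disjoint ({a} : Finset (Fin N)) s := Finset.disjoint_singleton_left.2 ha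
        have key := hNA {a} s hdisj f g hmono_f hmono_g hmf hmg hdf hdg
        calc ∫ ω, ∏ i ∈ insert a s, Real.exp (l * z i * X i ω) ∂μ
            = ∫ ω, f (fun i => X i ω) * g (fun i => X i ω) ∂μ := by
              refine integral_congr_ae (Filter.Eventually.of_forall fun ω => ?_)
              exact Finset.prod_insert ha
        _ ≤ (∫ ω, f (fun i => X i ω) ∂μ) * ∫ ω, g (fun i => X i ω) ∂μ := key
        _ ≤ (∫ ω, f (fun i => X i ω) ∂μ) * ∏ i ∈ s, ∫ ω, Real.exp (l * z i * X i ω) ∂μ :=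
            mul_le_mul_of_nonneg_left ih (integral_nonneg fun ω => (Real.exp_pos _).le)
        _ = ∏ i ∈ insert a s, ∫ ω, Real.exp (l * z i * X i ω) ∂μ := by
            rw [Finset.prod_insert ha]
    set S := fun ω => ∑ i, z i * X i ω with hSdef
    have hSmeas : Measurable S := Finset.measurable_sum _ fun i _ => (hmeas i).const_mul (z i)
    have hball : ∀ᵐ ω ∂μ, ∀ i, |X i ω| ≤ 1 := ae_all_iff.2 hbdd
    have hSint : Integrable (fun ω => Real.exp (l * S ω)) μ :=
      int_of_bound (C := Real.exp (l * ∑ i, z i)) ((hSmeas.const_mul l).exp).aestronglyMeasurable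
        (hball.mono fun ω h => by
          rw [abs_of_pos (Real.exp_pos _), Real.exp_le_exp]
          refine mul_le_mul_of_nonneg_left (Finset.sum_le_sum fun i _ => ?_) hl.le
          calc z i * X i ω ≤ z i * 1 :=
                mul_le_mul_of_nonneg_left (le_trans (le_abs_self _) (h i)) (hz i)
          _ = z i := mul_one _)
    have chern := ProbabilityTheory.measure_ge_le_exp_mul_mgf (X := S) (μ := μ) (t := l)
      δ hl.le hSint
    have hprod_split : ∀ ω, Real.exp (l * S ω) = ∏ i, Real.exp (l * z i * X i ω) := by
      intro ω
      have hls : l * S ω = ∑ i, l * z i * X i ω := by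
        rw [hSdef]
        simp only
        rw [Finset.mul_sum]
        exact Finset.sum_congr rfl fun i _ => by ring
      rw [hls, Real.exp_sum]
    have hmgf : ProbabilityTheory.mgf S μ l = ∫ ω, ∏ i, Real.exp (l * z i * X i ω) ∂μ := by
      rw [show ProbabilityTheory.mgf S μ l = ∫ ω, Real.exp (l * S ω) ∂μ from rfl]
      exact integral_congr_ae (Filter.Eventually.of_forall fun ω => hprod_split ω)
    have hsum_eq : ∑ i, (l * z i) ^ 2 * σ2 i / (2 * (1 - l * M / 3))
        = l ^ 2 * V / (2 * (1 - l * M / 3)) := by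
      rw [hVdef, Finset.mul_sum, Finset.sum_div]
      exact Finset.sum_congr rfl fun i _ => by ring
    have halg : -l * δ + l ^ 2 * V / (2 * (1 - l * M / 3))
        = -(3 * δ ^ 2) / (2 * δ * M + 6 * V) := by
      rw [hden, hldef, hKdef]
      have h1 : (3:ℝ) * V + M * δ ≠ 0 := by nlinarith
      field_simp
      ring
    calc (μ {ω | δ ≤ S ω}).toReal ≤ Real.exp (-l * δ) * ProbabilityTheory.mgf S μ l := chern
    _ = Real.exp (-l * δ) * ∫ ω, ∏ i, Real.exp (l * z i * X i ω) ∂μ := by rw [hmgf]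
    _ ≤ Real.exp (-l * δ) * ∏ i, ∫ ω, Real.exp (l * z i * X i ω) ∂μ :=
        mul_le_mul_of_nonneg_left (prodNA Finset.univ) (Real.exp_pos _).le
    _ ≤ Real.exp (-l * δ) * ∏ i, Real.exp ((l * z i) ^ 2 * σ2 i / (2 * (1 - l * M / 3))) :=
        mul_le_mul_of_nonneg_left
          (Finset.prod_le_prod (fun i _ => integral_nonneg fun ω => (Real.exp_pos _).le)
            fun i _ => factor i) (Real.exp_pos _).le
    _ = Real.exp (-l * δ + ∑ i, (l * z i) ^ 2 * σ2 i / (2 * (1 - l * M / 3))) := by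
        rw [Real.exp_add, Real.exp_sum]
    _ = Real.exp (-(3 * δ ^ 2) / (2 * δ * M + 6 * V)) := by
        rw [hsum_eq, halg]
end

section
/- Over the simplex Δ_2 with losses f^{(t)}(x) = −x_2 for odd t and f^{(t)} = 0 for even t, started at (1/2,1/2), any algorithm alternating a Euclidean mirror-descent step (step size η_euc < 16/T, on odd steps) with an entropic step (on even steps, with zero gradient) incurs regret at least T/128. -/
open Finset Real

lemma pair_sum' (f : ℕ → ℝ) (n : ℕ) :
    ∑ t ∈ Finset.range (2 * n), f t
      = ∑ j ∈ Finset.range n, (f (2 * j) + f (2 * j + 1)) := by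
  induction n with
  | zero => simp
  | succ m ih =>
    rw [show 2 * (m + 1) = 2 * m + 1 + 1 from by ring, Finset.sum_range_succ,
      Finset.sum_range_succ, ih, Finset.sum_range_succ]
    ring

lemma gauss_cast (k : ℕ) : ∑ j ∈ Finset.range k, (j : ℝ) = (k : ℝ) * ((k : ℝ) - 1) / 2 := by
  induction k with
  | zero => simp
  | succ n ih =>
    rw [Finset.sum_range_succ, ih]
    push_cast
    ring

/-- Over `Δ₂` with losses `f^{(t)}(x) = −x₂` for odd `t` (our `0`-indexed even `t`) and
`f^{(t)} = 0` for even `t`, started at `(1/2, 1/2)`, any algorithm alternating a Euclidean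
mirror-descent step (step size `η < 16/T`, moving `x₂` to `min(x₂ + η/2, 1)`) on odd rounds
with an entropic step (no movement, gradient zero) on even rounds incurs regret ≥ `T/128`. -/
theorem alternating_small_step_linear_regret (T : ℕ) (hT : 0 < T) (h16 : 16 ∣ T)
    (η : ℝ) (hη : 0 ≤ η) (hηT : η < 16 / (T : ℝ))
    (x : ℕ → Fin 2 → ℝ) (hx0 : x 0 = fun _ => (1 : ℝ) / 2)
    (hxK : ∀ t, x t ∈ stdSimplex ℝ (Fin 2))
    -- odd rounds (`0`-indexed even `t`): Euclidean step with gradient `(0, −1)`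
    (hodd : ∀ t, t % 2 = 0 →
      x (t + 1) 1 = min (x t 1 + η / 2) 1 ∧ x (t + 1) 0 = 1 - x (t + 1) 1)
    -- even rounds: zero loss, the entropic step leaves the iterate unchanged
    (heven : ∀ t, t % 2 = 1 → x (t + 1) = x t) :
    (∑ t ∈ Finset.range T, (if t % 2 = 0 then -(x t 1) else 0))
        - sInf {v : ℝ | ∃ z ∈ stdSimplex ℝ (Fin 2),
            v = ∑ t ∈ Finset.range T, (if t % 2 = 0 then -(z 1) else 0)}
      ≥ (T : ℝ) / 128 := by
  obtain ⟨k, hk⟩ := h16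
  have hk1 : 1 ≤ k := by omega
  have hkR : (1 : ℝ) ≤ (k : ℝ) := by exact_mod_cast hk1
  have hTR : (T : ℝ) = 16 * (k : ℝ) := by exact_mod_cast congrArg (Nat.cast : ℕ → ℝ) hk
  have hTpos : (0 : ℝ) < (T : ℝ) := by exact_mod_cast hT
  -- x t 1 ≤ 1
  have hle1 : ∀ t, x t 1 ≤ 1 := by
    intro t
    obtain ⟨hpos, hsum⟩ := hxK t
    have h0 := hpos 0
    rw [Fin.sum_univ_two] at hsum
    linarith
  -- growth bound
  have hb : ∀ t, x t 1 ≤ 1 / 2 + η * ((t : ℝ) + ((t % 2 : ℕ) : ℝ)) / 4 := by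
    intro t
    induction t with
    | zero => simp [hx0]
    | succ n ih =>
      rcases Nat.even_or_odd n with he | ho
      · have hn : n % 2 = 0 := Nat.even_iff.mp he
        have hm : (n + 1) % 2 = 1 := by omega
        have h1 := (hodd n hn).1
        rw [hn] at ih
        rw [hm]
        have hstep : x (n + 1) 1 ≤ x n 1 + η / 2 := by
          rw [h1]; exact min_le_left _ _
        push_cast at ih ⊢
        linarith
      · have hn : n % 2 = 1 := Nat.odd_iff.mp ho
        have hm : (n + 1) % 2 = 0 := by omega
        have h1 := heven n hn
        rw [hn] at ih
        rw [hm, h1]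
        push_cast at ih ⊢
        linarith
  have hTk : T = 2 * (8 * k) := by omega
  -- rewrite the algorithm's loss
  have hA : (∑ t ∈ Finset.range T, (if t % 2 = 0 then -(x t 1) else 0))
      = - ∑ j ∈ Finset.range (8 * k), x (2 * j) 1 := by
    rw [hTk, pair_sum']
    rw [← Finset.sum_neg_distrib]
    apply Finset.sum_congr rfl
    intro j _
    have h0 : (2 * j) % 2 = 0 := by omega
    have h1 : (2 * j + 1) % 2 = 1 := by omega
    simp [h0, h1]
  -- the comparator value
  have hmem : (-((T : ℝ) / 2)) ∈ {v : ℝ | ∃ z ∈ stdSimplex ℝ (Fin 2),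
      v = ∑ t ∈ Finset.range T, (if t % 2 = 0 then -(z 1) else 0)} := by
    refine ⟨![0, 1], ⟨?_, ?_⟩, ?_⟩
    · intro i; fin_cases i <;> norm_num
    · simp [Fin.sum_univ_two]
    · rw [hTk, pair_sum']
      have hc : ∀ j ∈ Finset.range (8 * k),
          ((if (2 * j) % 2 = 0 then -((![0, 1] : Fin 2 → ℝ) 1) else 0)
            + (if (2 * j + 1) % 2 = 0 then -((![0, 1] : Fin 2 → ℝ) 1) else 0)) = -1 := by
        intro j _
        have h0 : (2 * j) % 2 = 0 := by omega
        have h1 : (2 * j + 1) % 2 = 1 := by omega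
        simp [h0, h1]
      rw [Finset.sum_congr rfl hc, Finset.sum_const, Finset.card_range]
      simp only [nsmul_eq_mul]
      push_cast
      ring
  have hbdd : BddBelow {v : ℝ | ∃ z ∈ stdSimplex ℝ (Fin 2),
      v = ∑ t ∈ Finset.range T, (if t % 2 = 0 then -(z 1) else 0)} := by
    refine ⟨-(T : ℝ), ?_⟩
    rintro v ⟨z, hz, rfl⟩
    have hz1 : z 1 ≤ 1 := by
      have h0 := hz.1 0
      have hs := hz.2
      rw [Fin.sum_univ_two] at hs
      linarith
    have hterm : ∀ t ∈ Finset.range T, (-1 : ℝ) ≤ (if t % 2 = 0 then -(z 1) else 0) := by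
      intro t _
      split <;> linarith
    calc -(T : ℝ) = ∑ _t ∈ Finset.range T, (-1 : ℝ) := by
          simp
      _ ≤ _ := Finset.sum_le_sum hterm
  have hsInf : sInf {v : ℝ | ∃ z ∈ stdSimplex ℝ (Fin 2),
      v = ∑ t ∈ Finset.range T, (if t % 2 = 0 then -(z 1) else 0)} ≤ -((T : ℝ) / 2) :=
    csInf_le hbdd hmem
  -- bound the sum of iterates
  have hηk : η * (k : ℝ) < 1 := by
    have h1 : η * (T : ℝ) < 16 := (lt_div_iff₀ hTpos).mp hηT
    rw [hTR] at h1
    nlinarith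
  have hS : ∑ j ∈ Finset.range (8 * k), x (2 * j) 1 ≤ (T : ℝ) / 2 - (T : ℝ) / 128 := by
    have hsplit : ∑ j ∈ Finset.range (8 * k), x (2 * j) 1
        = ∑ j ∈ Finset.range k, x (2 * j) 1 + ∑ j ∈ Finset.Ico k (8 * k), x (2 * j) 1 := by
      rw [Finset.range_eq_Ico,
        ← Finset.sum_Ico_consecutive _ (Nat.zero_le k) (by omega : k ≤ 8 * k), Finset.range_eq_Ico]
    have h1 : ∑ j ∈ Finset.range k, x (2 * j) 1
        ≤ ∑ j ∈ Finset.range k, (1 / 2 + η * (j : ℝ) / 2) := by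
      apply Finset.sum_le_sum
      intro j _
      have hbj := hb (2 * j)
      have hmod : (2 * j) % 2 = 0 := by omega
      rw [hmod] at hbj
      push_cast at hbj
      linarith
    have h1' : ∑ j ∈ Finset.range k, (1 / 2 + η * (j : ℝ) / 2)
        = (k : ℝ) / 2 + η * ((k : ℝ) * ((k : ℝ) - 1)) / 4 := by
      rw [Finset.sum_add_distrib, Finset.sum_const, Finset.card_range, ← Finset.sum_div,
        ← Finset.mul_sum, gauss_cast]
      push_cast
      ring
    have h2 : ∑ j ∈ Finset.Ico k (8 * k), x (2 * j) 1 ≤ 7 * (k : ℝ) := by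
      calc ∑ j ∈ Finset.Ico k (8 * k), x (2 * j) 1
          ≤ ∑ _j ∈ Finset.Ico k (8 * k), (1 : ℝ) :=
            Finset.sum_le_sum (fun j _ => hle1 (2 * j))
        _ = 7 * (k : ℝ) := by
            rw [Finset.sum_const, Nat.card_Ico]
            have : 8 * k - k = 7 * k := by omega
            rw [this]
            push_cast
            ring
    have hmul : η * ((k : ℝ) * ((k : ℝ) - 1)) ≤ (k : ℝ) - 1 := by
      have hkk : (0 : ℝ) ≤ (k : ℝ) - 1 := by linarith
      nlinarith
    rw [hsplit, hTR]
    nlinarith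
  rw [hA]
  linarith
end

section
/- Over the simplex Δ_2 with losses f^{(t)}(x) = −x_1 for odd t, f^{(t)} = 0 for even t ≤ T/8, and f^{(t)}(x) = −2x_2 for even t > T/8, started at (1/2,1/2): if the algorithm uses Euclidean mirror descent steps with step size η_euc ≥ 16/T on odd steps and entropic steps on even steps, then its regret is at least T/4. -/
open Finset Real

/-- The loss at (0-indexed) round `t`: `−x₁` on odd (1-indexed) rounds, `0` on even rounds
up to `T/8`, and `−2x₂` on even rounds after `T/8`. -/
noncomputable def altLoss (T t : ℕ) (z : Fin 2 → ℝ) : ℝ :=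
  if t % 2 = 0 then -(z 0) else if t + 1 ≤ T / 8 then 0 else -2 * z 1

lemma parity_sum (a b : ℝ) (n : ℕ) :
    ∑ t ∈ Finset.range (2*n), (if t % 2 = 0 then a else b) = n * (a + b) := by
  induction n with
  | zero => simp
  | succ n ih =>
    have h : 2*(n+1) = 2*n+1+1 := by ring
    rw [h, Finset.sum_range_succ, Finset.sum_range_succ, ih,
      if_pos (by omega : (2*n) % 2 = 0), if_neg (by omega : ¬ (2*n+1) % 2 = 0)]
    push_cast; ring

/-- Over `Δ₂`, started at `(1/2, 1/2)`, alternating Euclidean steps (step size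
`η_euc ≥ 16/T`) on odd rounds with entropic steps (step size `η_ent`) on even rounds
incurs regret at least `T/4` under the losses `altLoss`. -/
theorem alternating_large_step_linear_regret (T : ℕ) (hT : 0 < T) (h16 : 16 ∣ T)
    (ηe ηn : ℝ) (hηe : 16 / (T : ℝ) ≤ ηe) (hηn : 0 ≤ ηn)
    (x : ℕ → Fin 2 → ℝ) (hx0 : x 0 = fun _ => (1 : ℝ) / 2)
    (hxK : ∀ t, x t ∈ stdSimplex ℝ (Fin 2))
    -- odd rounds (`0`-indexed even `t`): Euclidean step with gradient `(−1, 0)`,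
    -- projected back onto the simplex
    (hodd : ∀ t, t % 2 = 0 →
      x (t + 1) 0 = min (x t 0 + ηe / 2) 1 ∧ x (t + 1) 1 = 1 - x (t + 1) 0)
    -- early even rounds: zero loss, entropic step leaves the iterate unchanged
    (heven0 : ∀ t, t % 2 = 1 → t + 1 ≤ T / 8 → x (t + 1) = x t)
    -- late even rounds: entropic step with gradient `(0, −2)`
    (heven2 : ∀ t, t % 2 = 1 → T / 8 < t + 1 →
      x (t + 1) 1 = x t 1 * Real.exp (2 * ηn) / (x t 0 + x t 1 * Real.exp (2 * ηn)) ∧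
      x (t + 1) 0 = x t 0 / (x t 0 + x t 1 * Real.exp (2 * ηn))) :
    (∑ t ∈ Finset.range T, altLoss T t (x t))
        - sInf {v : ℝ | ∃ z ∈ stdSimplex ℝ (Fin 2),
            v = ∑ t ∈ Finset.range T, altLoss T t z}
      ≥ (T : ℝ) / 4 := by
  obtain ⟨m, rfl⟩ := h16
  have hm : 1 ≤ m := by omega
  have hdiv : 16 * m / 8 = 2 * m := by omega
  have hsum : ∀ t, x t 0 + x t 1 = 1 := by
    intro t
    have h := (hxK t).2
    rwa [Fin.sum_univ_two] at h
  have hnn : ∀ t i, 0 ≤ x t i := fun t => (hxK t).1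
  have hub : ∀ t, x t 0 ≤ 1 := fun t => by linarith [hsum t, hnn t 1]
  have hηe0 : 0 < ηe := by
    have hmR : (0:ℝ) < (16*m : ℕ) := by positivity
    have : (0:ℝ) < 16 / ((16*m : ℕ) : ℝ) := by positivity
    linarith
  -- Claim A : ramp up
  have hA : ∀ k, k ≤ m → min (1/2 + (k:ℝ) * (ηe/2)) 1 ≤ x (2*k) 0 := by
    intro k
    induction k with
    | zero => intro _; simp [hx0]
    | succ k ih =>
      intro hk
      have ih' := ih (by omega)
      have h1 := (hodd (2*k) (by omega)).1
      have h2 := heven0 (2*k+1) (by omega) (by omega)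
      have e : 2*(k+1) = 2*k+1+1 := by ring
      rw [e, h2, h1]
      push_cast
      rcases le_total ((1:ℝ)/2 + (k:ℝ)*(ηe/2)) 1 with h | h
      · rw [min_eq_left h] at ih'
        refine le_min ?_ (min_le_right _ _)
        have := min_le_left (1/2 + ((k:ℝ)+1)*(ηe/2)) 1
        nlinarith
      · rw [min_eq_right h] at ih'
        refine le_min ?_ (min_le_right _ _)
        have := min_le_right (1/2 + ((k:ℝ)+1)*(ηe/2)) 1
        linarith
  have hA2m : x (2*m) 0 = 1 := by
    have h1 := hA m le_rfl
    have hcast : ((16*m : ℕ) : ℝ) = 16 * (m:ℝ) := by push_cast; ring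
    rw [hcast] at hηe
    have hmR : (1:ℝ) ≤ (m:ℝ) := by exact_mod_cast hm
    have hmin : min (1/2 + (m:ℝ) * (ηe/2)) 1 = 1 := by
      apply min_eq_right
      have h16m : (16:ℝ) / (16*(m:ℝ)) = 1/(m:ℝ) := by
        field_simp
      rw [h16m] at hηe
      have : (m:ℝ) * (1/(m:ℝ)) ≤ (m:ℝ) * ηe := by
        apply mul_le_mul_of_nonneg_left hηe (by linarith)
      have hmne : (m:ℝ) ≠ 0 := by linarith
      rw [mul_one_div_cancel hmne] at this
      nlinarith
    rw [hmin] at h1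
    exact le_antisymm (hub _) h1
  -- Claim B : stays at 1
  have hB : ∀ t, 2*m ≤ t → x t 0 = 1 := by
    intro t ht
    induction t, ht using Nat.le_induction with
    | base => exact hA2m
    | succ t ht ih =>
      rcases Nat.mod_two_eq_zero_or_one t with h | h
      · have h1 := (hodd t h).1
        rw [h1, ih]
        exact min_eq_right (by linarith)
      · have h2 := (heven2 t h (by omega)).2
        have h1 : x t 1 = 0 := by linarith [hsum t]
        rw [h2, ih, h1]
        norm_num
  have hB1 : ∀ t, 2*m ≤ t → x t 1 = 0 := fun t ht => by linarith [hsum t, hB t ht]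
  -- lower bound on the algorithm's total loss
  have hterm : ∀ t ∈ Finset.range (16*m),
      (if t % 2 = 0 then (-1:ℝ) else 0) ≤ altLoss (16*m) t (x t) := by
    intro t _
    unfold altLoss
    rcases Nat.mod_two_eq_zero_or_one t with h | h
    · rw [if_pos h, if_pos h]
      linarith [hub t]
    · rw [if_neg (by omega), if_neg (by omega)]
      by_cases hc : t + 1 ≤ 16*m/8
      · rw [if_pos hc]
      · rw [if_neg hc]
        have h1 : x t 1 = 0 := hB1 t (by omega)
        rw [h1]; norm_num
  have halg : -(8*(m:ℝ)) ≤ ∑ t ∈ Finset.range (16*m), altLoss (16*m) t (x t) := by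
    have h1 : ∑ t ∈ Finset.range (16*m), (if t % 2 = 0 then (-1:ℝ) else 0)
        = -(8*(m:ℝ)) := by
      have : 16*m = 2*(8*m) := by ring
      rw [this, parity_sum]
      push_cast; ring
    calc -(8*(m:ℝ)) = ∑ t ∈ Finset.range (16*m), (if t % 2 = 0 then (-1:ℝ) else 0) :=
          h1.symm
      _ ≤ _ := Finset.sum_le_sum hterm
  -- the comparator z = (0,1)
  set S : Set ℝ := {v : ℝ | ∃ z ∈ stdSimplex ℝ (Fin 2),
      v = ∑ t ∈ Finset.range (16*m), altLoss (16*m) t z} with hS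
  have hzmem : (![0,1] : Fin 2 → ℝ) ∈ stdSimplex ℝ (Fin 2) := by
    constructor
    · intro i; fin_cases i <;> norm_num
    · rw [Fin.sum_univ_two]; norm_num
  have hval : ∑ t ∈ Finset.range (16*m), altLoss (16*m) t (![0,1] : Fin 2 → ℝ)
      = -(14*(m:ℝ)) := by
    have hsplit : ∑ t ∈ Finset.range (16*m), altLoss (16*m) t (![0,1] : Fin 2 → ℝ)
        = ∑ t ∈ Finset.range (16*m),
            ((if t % 2 = 0 then (0:ℝ) else -2) - (if t < 2*m ∧ t % 2 = 1 then (-2:ℝ) else 0)) := by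
      apply Finset.sum_congr rfl
      intro t _
      unfold altLoss
      split_ifs <;> first
        | (exfalso; omega)
        | norm_num
    rw [hsplit, Finset.sum_sub_distrib]
    have e1 : ∑ t ∈ Finset.range (16*m), (if t % 2 = 0 then (0:ℝ) else -2)
        = -(16*(m:ℝ)) := by
      have : 16*m = 2*(8*m) := by ring
      rw [this, parity_sum]; push_cast; ring
    have e2 : ∑ t ∈ Finset.range (16*m), (if t < 2*m ∧ t % 2 = 1 then (-2:ℝ) else 0)
        = -(2*(m:ℝ)) := by
      have hsub : ∑ t ∈ Finset.range (16*m), (if t < 2*m ∧ t % 2 = 1 then (-2:ℝ) else 0)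
          = ∑ t ∈ Finset.range (2*m), (if t % 2 = 0 then (0:ℝ) else -2) := by
        rw [← Finset.sum_subset (Finset.range_subset_range.2 (by omega : 2*m ≤ 16*m))]
        · apply Finset.sum_congr rfl
          intro t ht
          rw [Finset.mem_range] at ht
          rcases Nat.mod_two_eq_zero_or_one t with h | h
          · rw [if_neg (by omega), if_pos h]
          · rw [if_pos ⟨ht, h⟩, if_neg (by omega)]
        · intro t _ ht
          rw [Finset.mem_range] at ht
          rw [if_neg (by omega)]
      rw [hsub, parity_sum]; push_cast; ring
    rw [e1, e2]; ring
  have hmemS : -(14*(m:ℝ)) ∈ S := ⟨![0,1], hzmem, hval.symm⟩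
  have hbdd : BddBelow S := by
    refine ⟨-(32*(m:ℝ)), ?_⟩
    rintro v ⟨z, hz, rfl⟩
    have hz0 : 0 ≤ z 0 := hz.1 0
    have hz1 : 0 ≤ z 1 := hz.1 1
    have hzs : z 0 + z 1 = 1 := by have h := hz.2; rwa [Fin.sum_univ_two] at h
    have hterm2 : ∀ t ∈ Finset.range (16*m), (-2:ℝ) ≤ altLoss (16*m) t z := by
      intro t _
      unfold altLoss
      rcases Nat.mod_two_eq_zero_or_one t with h | h
      · rw [if_pos h]; linarith
      · rw [if_neg (by omega)]
        by_cases hc : t + 1 ≤ 16*m/8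
        · rw [if_pos hc]; norm_num
        · rw [if_neg hc]; nlinarith
    calc -(32*(m:ℝ)) = ∑ _t ∈ Finset.range (16*m), (-2:ℝ) := by
          rw [Finset.sum_const, Finset.card_range]; push_cast; ring
      _ ≤ _ := Finset.sum_le_sum hterm2
  have hInf : sInf S ≤ -(14*(m:ℝ)) := csInf_le hbdd hmemS
  have hcast : ((16*m : ℕ) : ℝ) = 16 * (m:ℝ) := by push_cast; ring
  rw [ge_iff_le, hcast]
  linarith
end

section
/- Multiplicative weights over N experts (mirror maps): if at each round the algorithm plays x^{(t)} = Σ_ℓ p_ℓ^{(t)} X_ℓ^{(t)}, updates weights w_ℓ^{(t+1)} = w_ℓ^{(t)} exp(−ε f^{(t)}(X_ℓ^{(t)})/ρ) (normalized), losses are convex with max_{x,z∈K} f^{(t)}(x) − f^{(t)}(z) ≤ ρ, and T ≥ ln N with ε = √(ln N / T), then regret(T) ≤ min_ℓ regret_ℓ(T) + 2ρ√(T ln N). -/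
open Finset Real

lemma exp_le_one_add_add_sq {x : ℝ} (hx : |x| ≤ 1) : Real.exp x ≤ 1 + x + x ^ 2 := by
  have h := Real.exp_bound hx (n := 3) (by norm_num)
  have h1 := (abs_sub_le_iff.1 h).1
  have hx2 : |x| ^ 3 ≤ x ^ 2 := by
    calc |x| ^ 3 ≤ |x| ^ 2 := pow_le_pow_of_le_one (abs_nonneg x) hx (by norm_num)
    _ = x ^ 2 := sq_abs x
  have hs : ∑ m ∈ Finset.range 3, x ^ m / m.factorial = 1 + x + x ^ 2 / 2 := by
    rw [Finset.sum_range_succ, Finset.sum_range_succ, Finset.sum_range_succ]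
    norm_num [Nat.factorial]
  rw [hs] at h1
  norm_num [Nat.factorial] at h1
  nlinarith [h1, hx2]

lemma mw_core {N : ℕ} (hN : 0 < N) {ε : ℝ} (hε0 : 0 ≤ ε) (hε1 : ε ≤ 1)
    (g : Fin N → ℕ → ℝ) (hg : ∀ ℓ t, |g ℓ t| ≤ 1)
    (v : Fin N → ℕ → ℝ)
    (hv : ∀ ℓ t, v ℓ t = Real.exp (-(ε * ∑ s ∈ Finset.range t, g ℓ s)))
    (T : ℕ) (ℓ0 : Fin N) :
    ε * ∑ t ∈ Finset.range T, (∑ ℓ, (v ℓ t / ∑ k, v k t) * g ℓ t)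
      ≤ ε * ∑ t ∈ Finset.range T, g ℓ0 t + Real.log N + ε ^ 2 * T := by
  have : Nonempty (Fin N) := ⟨⟨0, hN⟩⟩
  have hvpos : ∀ ℓ t, 0 < v ℓ t := fun ℓ t => by rw [hv]; exact Real.exp_pos _
  set Ψ : ℕ → ℝ := fun t => ∑ k, v k t with hΨ
  have hΨpos : ∀ t, 0 < Ψ t := fun t =>
    Finset.sum_pos (fun k _ => hvpos k t) Finset.univ_nonempty
  set G : ℕ → ℝ := fun t => ∑ ℓ, (v ℓ t / Ψ t) * g ℓ t with hG
  -- step bound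
  have hstep : ∀ t, Ψ (t + 1) ≤ Ψ t * Real.exp (-(ε * G t) + ε ^ 2) := by
    intro t
    have hvstep : ∀ ℓ, v ℓ (t + 1) = v ℓ t * Real.exp (-(ε * g ℓ t)) := by
      intro ℓ
      rw [hv, hv, ← Real.exp_add, Finset.sum_range_succ]
      ring_nf
    have hexp : ∀ ℓ : Fin N, Real.exp (-(ε * g ℓ t)) ≤ 1 - ε * g ℓ t + ε ^ 2 := by
      intro ℓ
      have habs : |(-(ε * g ℓ t))| ≤ 1 := by
        rw [abs_neg, abs_mul, abs_of_nonneg hε0]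
        have := mul_le_one₀ hε1 (abs_nonneg (g ℓ t)) (hg ℓ t)
        linarith
      have h2 := exp_le_one_add_add_sq habs
      have hg2 : (g ℓ t) ^ 2 ≤ 1 := by
        have := sq_abs (g ℓ t)
        nlinarith [hg ℓ t, abs_nonneg (g ℓ t)]
      nlinarith [sq_nonneg ε, sq_nonneg (g ℓ t), hε0]
    have h1 : Ψ (t + 1) ≤ ∑ ℓ, v ℓ t * (1 - ε * g ℓ t + ε ^ 2) := by
      simp only [hΨ]
      refine Finset.sum_le_sum fun ℓ _ => ?_
      rw [hvstep ℓ]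
      exact mul_le_mul_of_nonneg_left (hexp ℓ) (hvpos ℓ t).le
    have hvg : ∑ ℓ, v ℓ t * g ℓ t = Ψ t * G t := by
      rw [hG]
      rw [Finset.mul_sum]
      refine Finset.sum_congr rfl fun ℓ _ => ?_
      field_simp
      rw [mul_div_assoc, div_self (hΨpos t).ne', mul_one]
    have h2 : ∑ ℓ, v ℓ t * (1 - ε * g ℓ t + ε ^ 2) = Ψ t * (1 + (-(ε * G t) + ε ^ 2)) := by
      have : ∀ ℓ : Fin N, v ℓ t * (1 - ε * g ℓ t + ε ^ 2)
          = v ℓ t * (1 + ε ^ 2) - ε * (v ℓ t * g ℓ t) := fun ℓ => by ring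
      simp_rw [this, Finset.sum_sub_distrib, ← Finset.sum_mul, ← Finset.mul_sum, hvg]
      ring
    have h3 : 1 + (-(ε * G t) + ε ^ 2) ≤ Real.exp (-(ε * G t) + ε ^ 2) := by
      have := Real.add_one_le_exp (-(ε * G t) + ε ^ 2)
      linarith
    calc Ψ (t + 1) ≤ ∑ ℓ, v ℓ t * (1 - ε * g ℓ t + ε ^ 2) := h1
      _ = Ψ t * (1 + (-(ε * G t) + ε ^ 2)) := h2
      _ ≤ Ψ t * Real.exp (-(ε * G t) + ε ^ 2) :=
          mul_le_mul_of_nonneg_left h3 (hΨpos t).le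
  -- telescoping
  have htel : ∀ n, Ψ n ≤ N * Real.exp (∑ t ∈ Finset.range n, (-(ε * G t) + ε ^ 2)) := by
    intro n
    induction n with
    | zero =>
        simp only [Finset.range_zero, Finset.sum_empty, Real.exp_zero, mul_one, hΨ]
        simp [hv]
    | succ n ih =>
        calc Ψ (n + 1) ≤ Ψ n * Real.exp (-(ε * G n) + ε ^ 2) := hstep n
          _ ≤ (N * Real.exp (∑ t ∈ Finset.range n, (-(ε * G t) + ε ^ 2)))
              * Real.exp (-(ε * G n) + ε ^ 2) :=
            mul_le_mul_of_nonneg_right ih (Real.exp_pos _).le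
          _ = N * Real.exp (∑ t ∈ Finset.range (n + 1), (-(ε * G t) + ε ^ 2)) := by
            simp only [Finset.sum_range_succ, Real.exp_add]; ring
  -- lower bound by best expert
  have hlow : Real.exp (-(ε * ∑ t ∈ Finset.range T, g ℓ0 t)) ≤ Ψ T := by
    rw [← hv ℓ0 T]
    exact Finset.single_le_sum (fun k _ => (hvpos k T).le) (Finset.mem_univ ℓ0)
  have hcomb := hlow.trans (htel T)
  have hNpos : (0:ℝ) < N := by exact_mod_cast hN
  have hlog : -(ε * ∑ t ∈ Finset.range T, g ℓ0 t)
      ≤ Real.log N + ∑ t ∈ Finset.range T, (-(ε * G t) + ε ^ 2) := by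
    have := Real.log_le_log (Real.exp_pos _) hcomb
    rwa [Real.log_exp, Real.log_mul (ne_of_gt hNpos) (ne_of_gt (Real.exp_pos _)),
      Real.log_exp] at this
  have hsum : ∑ t ∈ Finset.range T, (-(ε * G t) + ε ^ 2)
      = -(ε * ∑ t ∈ Finset.range T, G t) + ε ^ 2 * T := by
    rw [Finset.sum_add_distrib]
    simp [← Finset.mul_sum, Finset.sum_neg_distrib, mul_comm]
  rw [hsum] at hlog
  linarith


/-- Multiplicative weights over `N` experts (mirror maps): if the algorithm plays
`x^{(t)} = Σ_ℓ p_ℓ^{(t)} X_ℓ^{(t)}` with weights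
`w_ℓ^{(t+1)} = w_ℓ^{(t)} e^{−ε f^{(t)}(X_ℓ^{(t)})/ρ}` (normalized probabilities
`p_ℓ^{(t)} = w_ℓ^{(t)} / Σ_k w_k^{(t)}`), the losses are convex with
`f^{(t)}(x) − f^{(t)}(z) ≤ ρ` on `K`, `T ≥ ln N` and `ε = √(ln N / T)`, then
`regret(T) ≤ min_ℓ regret_ℓ(T) + 2ρ√(T ln N)`; since the benchmark `min_{x∈K} Σ_t f^{(t)}(x)`
is common to both regrets, this is equivalent to the played-loss total being at most the
best expert's total loss plus `2ρ√(T ln N)`. -/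
theorem mirrorWeights_regret {d N T : ℕ} (hN : 0 < N) (hT : 0 < T)
    (K : Set (Fin d → ℝ)) (hK : Convex ℝ K)
    (f : ℕ → (Fin d → ℝ) → ℝ) (hconv : ∀ t, ConvexOn ℝ K (f t))
    (ρ : ℝ) (hρ : 0 < ρ)
    (hbound : ∀ t, ∀ x ∈ K, ∀ z ∈ K, f t x - f t z ≤ ρ)
    (hTN : Real.log N ≤ (T : ℝ))
    (ε : ℝ) (hε : ε = Real.sqrt (Real.log N / T))
    (X : Fin N → ℕ → Fin d → ℝ) (hXK : ∀ ℓ t, X ℓ t ∈ K)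
    (w : Fin N → ℕ → ℝ) (hw0 : ∀ ℓ, w ℓ 0 = 1 / N)
    (hwstep : ∀ ℓ t, w ℓ (t + 1) = w ℓ t * Real.exp (-(ε * f t (X ℓ t)) / ρ))
    (xp : ℕ → Fin d → ℝ)
    (hxp : ∀ t, xp t = ∑ ℓ, (w ℓ t / ∑ k, w k t) • X ℓ t) :
    ∑ t ∈ Finset.range T, f t (xp t)
      ≤ (Finset.univ.inf' (Finset.univ_nonempty_iff.mpr ⟨⟨0, hN⟩⟩)
            (fun ℓ => ∑ t ∈ Finset.range T, f t (X ℓ t)))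
          + 2 * ρ * Real.sqrt ((T : ℝ) * Real.log N) := by
  have hne : (Finset.univ : Finset (Fin N)).Nonempty := Finset.univ_nonempty_iff.mpr ⟨⟨0, hN⟩⟩
  have : Nonempty (Fin N) := ⟨⟨0, hN⟩⟩
  have hNR : (0:ℝ) < N := by exact_mod_cast hN
  have hTR : (0:ℝ) < T := by exact_mod_cast hT
  have hwpos : ∀ t ℓ, 0 < w ℓ t := by
    intro t
    induction t with
    | zero => intro ℓ; rw [hw0]; positivity
    | succ n ih => intro ℓ; rw [hwstep]; exact mul_pos (ih ℓ) (Real.exp_pos _)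
  obtain ⟨ℓm, -, hℓm⟩ := Finset.exists_mem_eq_inf' hne
      (fun ℓ => ∑ t ∈ Finset.range T, f t (X ℓ t))
  rw [hℓm]
  by_cases hN1 : N = 1
  · -- single expert: xp t = X ℓm t and the sqrt term is zero
    subst hN1
    have hxp' : ∀ t, xp t = X ℓm t := by
      intro t
      rw [hxp]
      rw [Fin.sum_univ_one, Fin.sum_univ_one]
      have h0 : (0 : Fin 1) = ℓm := Subsingleton.elim _ _
      rw [h0, div_self (hwpos t ℓm).ne', one_smul]
    have hlog : Real.log (1:ℕ) = 0 := by norm_num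
    have hsq : Real.sqrt ((T:ℝ) * Real.log (1:ℕ)) = 0 := by
      rw [hlog, mul_zero, Real.sqrt_zero]
    rw [hsq, mul_zero]
    simp only [hxp']
    simp
  · -- N ≥ 2
    have hN2 : 1 < N := Nat.lt_of_le_of_ne hN (Ne.symm hN1)
    have hlogN : 0 < Real.log N := Real.log_pos (by exact_mod_cast hN2)
    have hε0 : 0 ≤ ε := by rw [hε]; exact Real.sqrt_nonneg _
    have hεpos : 0 < ε := by
      rw [hε]; exact Real.sqrt_pos.mpr (div_pos hlogN hTR)
    have hε1 : ε ≤ 1 := by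
      rw [hε]
      rw [show (1:ℝ) = Real.sqrt 1 by rw [Real.sqrt_one]]
      exact Real.sqrt_le_sqrt ((div_le_one hTR).mpr hTN)
    have hεsq : ε ^ 2 = Real.log N / T := by
      rw [hε, Real.sq_sqrt (div_nonneg hlogN.le hTR.le)]
    set ℓ0 : Fin N := ⟨0, hN⟩ with hℓ0
    set μ : ℕ → ℝ := fun t => f t (X ℓ0 t) with hμ
    set g : Fin N → ℕ → ℝ := fun ℓ t => (f t (X ℓ t) - μ t) / ρ with hgdef
    have hg : ∀ ℓ t, |g ℓ t| ≤ 1 := by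
      intro ℓ t
      rw [hgdef]
      rw [abs_div, abs_of_pos hρ, div_le_one hρ, abs_le]
      constructor
      · have := hbound t (X ℓ0 t) (hXK ℓ0 t) (X ℓ t) (hXK ℓ t); simp only [hμ]; linarith
      · exact hbound t (X ℓ t) (hXK ℓ t) (X ℓ0 t) (hXK ℓ0 t)
    set v : Fin N → ℕ → ℝ := fun ℓ t =>
      Real.exp (-(ε * ∑ s ∈ Finset.range t, g ℓ s)) with hvdef
    have hvpos : ∀ ℓ t, 0 < v ℓ t := fun ℓ t => Real.exp_pos _
    set c : ℕ → ℝ := fun t =>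
      (1 / N) * Real.exp (-(ε / ρ) * ∑ s ∈ Finset.range t, μ s) with hcdef
    have hcpos : ∀ t, 0 < c t := fun t => by positivity
    -- w factors through v
    have hwv : ∀ t ℓ, w ℓ t = c t * v ℓ t := by
      intro t
      induction t with
      | zero =>
          intro ℓ; rw [hw0]
          simp [hcdef, hvdef]
      | succ n ih =>
          intro ℓ
          rw [hwstep, ih ℓ]
          simp only [hcdef, hvdef, hgdef, Finset.sum_range_succ, mul_assoc, ← Real.exp_add]
          congr 2
          field_simp
          ring
    -- probabilities agree
    have hpeq : ∀ t ℓ, w ℓ t / ∑ k, w k t = v ℓ t / ∑ k, v k t := by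
      intro t ℓ
      rw [hwv t ℓ]
      have : ∑ k, w k t = c t * ∑ k, v k t := by
        rw [Finset.mul_sum]; exact Finset.sum_congr rfl fun k _ => hwv t k
      rw [this, mul_div_mul_left _ _ (hcpos t).ne']
    have hVpos : ∀ t, 0 < ∑ k, v k t := fun t =>
      Finset.sum_pos (fun k _ => hvpos k t) hne
    have hp1 : ∀ t, ∑ ℓ, v ℓ t / ∑ k, v k t = 1 := by
      intro t
      rw [← Finset.sum_div, div_self (hVpos t).ne']
    -- Jensen at each step
    have hjensen : ∀ t, f t (xp t) ≤ ∑ ℓ, (v ℓ t / ∑ k, v k t) * f t (X ℓ t) := by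
      intro t
      have hx : xp t = ∑ ℓ, (v ℓ t / ∑ k, v k t) • X ℓ t := by
        rw [hxp]
        exact Finset.sum_congr rfl fun ℓ _ => by rw [hpeq t ℓ]
      rw [hx]
      exact (hconv t).map_sum_le
        (fun ℓ _ => div_nonneg (hvpos ℓ t).le (hVpos t).le)
        (hp1 t) (fun ℓ _ => hXK ℓ t)
    -- relate to g-average
    have hGrel : ∀ t, f t (xp t) - μ t ≤ ρ * ∑ ℓ, (v ℓ t / ∑ k, v k t) * g ℓ t := by
      intro t
      have key : ρ * ∑ ℓ, (v ℓ t / ∑ k, v k t) * g ℓ t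
          = (∑ ℓ, (v ℓ t / ∑ k, v k t) * f t (X ℓ t)) - μ t := by
        rw [Finset.mul_sum]
        have : ∀ ℓ : Fin N, ρ * ((v ℓ t / ∑ k, v k t) * g ℓ t)
            = (v ℓ t / ∑ k, v k t) * f t (X ℓ t) - (v ℓ t / ∑ k, v k t) * μ t := by
          intro ℓ
          have hcan : ∀ x : ℝ, ρ * (x / ρ) = x := fun x => by field_simp
          simp only [hgdef]
          rw [mul_left_comm, hcan, mul_sub]
        rw [Finset.sum_congr rfl fun ℓ _ => this ℓ, Finset.sum_sub_distrib,
          ← Finset.sum_mul, hp1 t, one_mul]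
      rw [key]
      have := hjensen t
      linarith
    -- core bound
    have hcore := mw_core hN hε0 hε1 g hg v (fun ℓ t => rfl) T ℓm
    -- abbreviate
    set G : ℕ → ℝ := fun t => ∑ ℓ, (v ℓ t / ∑ k, v k t) * g ℓ t with hGdef
    have hsum1 : ∑ t ∈ Finset.range T, f t (xp t)
        ≤ (∑ t ∈ Finset.range T, μ t) + ρ * ∑ t ∈ Finset.range T, G t := by
      rw [Finset.mul_sum]
      have := Finset.sum_le_sum fun t (_ : t ∈ Finset.range T) => hGrel t
      rw [Finset.sum_sub_distrib] at this
      rw [← Finset.sum_add_distrib]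
      refine Finset.sum_le_sum fun t ht => ?_
      have := hGrel t
      linarith
    have hε2T : ε ^ 2 * T = Real.log N := by
      rw [hεsq, div_mul_cancel₀ _ hTR.ne']
    rw [hε2T] at hcore
    have hcore' : ∑ t ∈ Finset.range T, G t
        ≤ ∑ t ∈ Finset.range T, g ℓm t + 2 * Real.log N / ε := by
      have heq : ε * (∑ t ∈ Finset.range T, g ℓm t + 2 * Real.log N / ε)
          = ε * ∑ t ∈ Finset.range T, g ℓm t + 2 * Real.log N := by
        field_simp
      have h2 : ε * ∑ t ∈ Finset.range T, G t
          ≤ ε * (∑ t ∈ Finset.range T, g ℓm t + 2 * Real.log N / ε) := by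
        rw [heq]; linarith [hcore]
      exact le_of_mul_le_mul_left h2 hεpos
    have hgm : ρ * ∑ t ∈ Finset.range T, g ℓm t
        = (∑ t ∈ Finset.range T, f t (X ℓm t)) - ∑ t ∈ Finset.range T, μ t := by
      rw [Finset.mul_sum, ← Finset.sum_sub_distrib]
      refine Finset.sum_congr rfl fun t _ => ?_
      have hcan : ∀ x : ℝ, ρ * (x / ρ) = x := fun x => by field_simp
      simp only [hgdef]
      rw [hcan]
    have hsqrt : Real.log N / ε = Real.sqrt ((T:ℝ) * Real.log N) := by
      rw [div_eq_iff hεpos.ne', hε, ← Real.sqrt_mul (mul_nonneg hTR.le hlogN.le)]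
      rw [show (T:ℝ) * Real.log N * (Real.log N / T) = (Real.log N) ^ 2 by
        field_simp]
      exact (Real.sqrt_sq hlogN.le).symm
    have final : ρ * ∑ t ∈ Finset.range T, G t
        ≤ (∑ t ∈ Finset.range T, f t (X ℓm t)) - (∑ t ∈ Finset.range T, μ t)
          + 2 * ρ * Real.sqrt ((T:ℝ) * Real.log N) := by
      have h1 : ρ * ∑ t ∈ Finset.range T, G t
          ≤ ρ * (∑ t ∈ Finset.range T, g ℓm t + 2 * Real.log N / ε) :=
        mul_le_mul_of_nonneg_left hcore' hρ.le
      have h2 : ρ * (2 * Real.log N / ε) = 2 * ρ * Real.sqrt ((T:ℝ) * Real.log N) := by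
        rw [show 2 * Real.log N / ε = 2 * (Real.log N / ε) by ring, hsqrt]
        ring
      rw [mul_add] at h1
      rw [h2] at h1
      linarith [hgm, h1]
    linarith [hsum1, final]
end

section
/- Let P̂ = conv((1/R)e_1, ..., (1/R)e_d, (1/d)·1_d) with 2 ≤ R ≤ d, and z⁽¹⁾ = (1/d)·1_d. Then every z ∈ P̂ satisfies z_1 − 1/d ≤ γ ‖z − z⁽¹⁾‖_1, where γ = (1/R − 1/d)/(1 + 1/R − 2/d) ≤ 1/R. -/
open Finset Real

/-- The polytope `P̂ = conv((1/R)e₁, …, (1/R)e_d, (1/d)·1_d)`. -/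
def scaledPolytope (d : ℕ) (R : ℝ) : Set (Fin d → ℝ) :=
  convexHull ℝ
    ({v : Fin d → ℝ | ∃ i : Fin d, v = fun j => if j = i then 1 / R else 0}
      ∪ {fun _ => 1 / (d : ℝ)})

/-- For `P̂ = conv((1/R)e₁,…,(1/R)e_d,(1/d)1_d)` with `2 ≤ R ≤ d` and center
`z⁽¹⁾ = (1/d)1_d`, every `z ∈ P̂` satisfies `z₁ − 1/d ≤ γ ‖z − z⁽¹⁾‖₁` where
`γ = (1/R − 1/d)/(1 + 1/R − 2/d) ≤ 1/R`. -/
theorem scaledPolytope_first_coord_growth {d : ℕ} (hd : 0 < d)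
    (R : ℝ) (hR : 2 ≤ R) (hRd : R ≤ (d : ℝ))
    (z : Fin d → ℝ) (hz : z ∈ scaledPolytope d R) :
    z ⟨0, hd⟩ - 1 / (d : ℝ)
        ≤ ((1 / R - 1 / d) / (1 + 1 / R - 2 / d)) * ∑ i, |z i - 1 / (d : ℝ)| ∧
      (1 / R - 1 / (d : ℝ)) / (1 + 1 / R - 2 / d) ≤ 1 / R := by
  have hR0 : (0:ℝ) < R := by linarith
  have hd0 : (0:ℝ) < (d:ℝ) := by linarith
  set i0 : Fin d := ⟨0, hd⟩
  set r : ℝ := 1 / R with hr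
  set e : ℝ := 1 / (d:ℝ) with he
  have hr0 : 0 < r := by positivity
  have he0 : 0 < e := by positivity
  have her : e ≤ r := one_div_le_one_div_of_le hR0 hRd
  have hr2 : r ≤ 1/2 := one_div_le_one_div_of_le two_pos hR
  have hd2 : (2:ℝ) ≤ (d:ℝ) := le_trans hR hRd
  have he2 : e ≤ 1/2 := one_div_le_one_div_of_le two_pos hd2
  have hrR : r * R = 1 := by rw [hr]; field_simp
  have hed : e * (d:ℝ) = 1 := by rw [he]; field_simp
  have hDen : 0 < 1 + r - 2 * e := by linarith
  -- the key valid linear inequality on the polytope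
  have hS : (r - e) * (∑ j, z j) + (1 - r) * z i0 ≤ r - r * e := by
    have hsub : scaledPolytope d R ⊆
        {w : Fin d → ℝ | (r - e) * (∑ j, w j) + (1 - r) * w i0 ≤ r - r * e} := by
      apply convexHull_min
      · rintro w (⟨i, rfl⟩ | hw)
        · have hsum : (∑ j : Fin d, if j = i then 1 / R else 0) = r := by
            simp [hr]
          simp only [Set.mem_setOf_eq, hsum]
          by_cases h0 : i0 = i
          · simp only [if_pos h0]
            nlinarith [mul_pos hr0 he0]
          · simp only [if_neg h0]
            nlinarith [mul_pos hr0 he0, mul_pos hr0 hr0]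
        · simp only [Set.mem_singleton_iff] at hw
          subst hw
          have hsum : (∑ _j : Fin d, (1 / (d:ℝ))) = 1 := by
            rw [Finset.sum_const, Finset.card_univ, Fintype.card_fin,
              nsmul_eq_mul]
            field_simp
          simp only [Set.mem_setOf_eq, hsum, ← he]
          nlinarith
      · exact convex_halfSpace_le
          { map_add := fun x y => by
              simp only [Pi.add_apply]
              rw [Finset.sum_add_distrib]; ring
            map_smul := fun c x => by
              simp only [Pi.smul_apply, smul_eq_mul, ← Finset.mul_sum]
              ring } _
    exact hsub hz
  -- lower bound on the L1 distance
  have hT : 2 * z i0 - (∑ j, z j) + 1 - 2 * e ≤ ∑ i, |z i - e| := by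
    have hsplit : ∑ i, |z i - e| =
        |z i0 - e| + ∑ i ∈ univ.erase i0, |z i - e| :=
      (Finset.add_sum_erase univ _ (mem_univ i0)).symm
    have hzsplit : ∑ j, z j = z i0 + ∑ i ∈ univ.erase i0, z i :=
      (Finset.add_sum_erase univ _ (mem_univ i0)).symm
    have h1 : z i0 - e ≤ |z i0 - e| := le_abs_self _
    have h2 : ∑ i ∈ univ.erase i0, (e - z i) ≤ ∑ i ∈ univ.erase i0, |z i - e| := by
      apply Finset.sum_le_sum
      intro i _
      rw [abs_sub_comm]
      exact le_abs_self _
    have hcard : ((univ.erase i0).card : ℝ) = (d:ℝ) - 1 := by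
      rw [Finset.card_erase_of_mem (mem_univ i0), Finset.card_univ, Fintype.card_fin]
      have : (1:ℕ) ≤ d := hd
      push_cast [Nat.cast_sub this]
      ring
    have h3 : ∑ i ∈ univ.erase i0, (e - z i) =
        ((d:ℝ) - 1) * e - (∑ i ∈ univ.erase i0, z i) := by
      rw [Finset.sum_sub_distrib, Finset.sum_const, nsmul_eq_mul, hcard]
    have hde : ((d:ℝ) - 1) * e = 1 - e := by
      have : (d:ℝ) * e = 1 := by rw [mul_comm]; exact hed
      nlinarith
    rw [hsplit, hzsplit]
    rw [h3, hde] at h2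
    linarith
  constructor
  · have hgam0 : 0 ≤ (r - e) / (1 + r - 2 * e) := by
      apply div_nonneg (by linarith) hDen.le
    have step1 : ((r - e) / (1 + r - 2 * e)) * (2 * z i0 - (∑ j, z j) + 1 - 2 * e)
        ≤ ((r - e) / (1 + r - 2 * e)) * ∑ i, |z i - e| :=
      mul_le_mul_of_nonneg_left hT hgam0
    have step2 : z i0 - e ≤
        ((r - e) / (1 + r - 2 * e)) * (2 * z i0 - (∑ j, z j) + 1 - 2 * e) := by
      rw [div_mul_eq_mul_div, le_div_iff₀ hDen]
      nlinarith [hS]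
    have : (2:ℝ) / (d:ℝ) = 2 * e := by rw [he]; ring
    rw [this]
    calc z i0 - e ≤ _ := step2
      _ ≤ _ := step1
  · have : (2:ℝ) / (d:ℝ) = 2 * e := by rw [he]; ring
    rw [this, div_le_iff₀ hDen]
    nlinarith [mul_nonneg he0.le (by linarith : (0:ℝ) ≤ 1 - 2 * r), sq_nonneg r]
end
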